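/- arXiv:1408.3137 — 7 statements merged into one kernel-verified Lean document; each statement's English description precedes it below -/
import Mathlib

section
/- Let k ≥ 3 and n ≥ 2. Let G1 be the subgraph of K_k^n whose edges are: all pairs {u,w} with u ∈ V_1, w ∈ V_2 except the single pair {v_1^1, v_2^1}, together with all pairs joining each vertex of V_3 ∪ ... ∪ V_k to both v_1^1 and v_2^1. Then G1 is a K_3-saturated subgraph of K_k^n and the number of edges of G1 equals 2kn + n^2 − 4n − 1. -/
open SimpleGraph

/-- The complete balanced `k`-partite graph with partite sets `V_i = {i} × Fin n`. -/
def multipartite (k n : ℕ) : SimpleGraph (Fin k × Fin n) where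
  Adj u w := u.1 ≠ w.1
  symm := ⟨fun _ _ h => h.symm⟩
  loopless := ⟨fun _ h => h rfl⟩

/-- `J` is a `K_t`-saturated subgraph of `G`. -/
def IsSatIn {V : Type*} (t : ℕ) (J G : SimpleGraph V) : Prop :=
  J ≤ G ∧ J.CliqueFree t ∧
    ∀ u w : V, G.Adj u w → ¬ J.Adj u w →
      ¬ (J ⊔ SimpleGraph.fromEdgeSet {s(u, w)}).CliqueFree t

/-- Construction 1: all edges between `V_1` and `V_2` except `{v_1^1, v_2^1}`,
plus all edges joining each vertex of `V_3 ∪ ⋯ ∪ V_k` to both `v_1^1` and `v_2^1`. -/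
theorem stmt_0 (k n : ℕ) (hk : 3 ≤ k) (hn : 2 ≤ n)
    (G1 : SimpleGraph (Fin k × Fin n))
    (hG1 : G1 = SimpleGraph.fromRel (fun u w =>
      ((u.1 : ℕ) = 0 ∧ (w.1 : ℕ) = 1 ∧ ¬((u.2 : ℕ) = 0 ∧ (w.2 : ℕ) = 0)) ∨
      (2 ≤ (u.1 : ℕ) ∧ ((w.1 : ℕ) = 0 ∨ (w.1 : ℕ) = 1) ∧ (w.2 : ℕ) = 0))) :
    IsSatIn 3 G1 (multipartite k n) ∧
      (G1.edgeSet.ncard : ℤ) = 2 * k * n + (n : ℤ) ^ 2 - 4 * n - 1 := by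
  classical
  subst hG1
  set f : (Fin k × Fin n) → (Fin k × Fin n) → Prop := fun u w =>
      ((u.1 : ℕ) = 0 ∧ (w.1 : ℕ) = 1 ∧ ¬((u.2 : ℕ) = 0 ∧ (w.2 : ℕ) = 0)) ∨
      (2 ≤ (u.1 : ℕ) ∧ ((w.1 : ℕ) = 0 ∨ (w.1 : ℕ) = 1) ∧ (w.2 : ℕ) = 0) with hf
  -- basic facts
  have hRne : ∀ a b : Fin k × Fin n, f a b → a ≠ b := by
    intro a b h he
    subst he
    simp only [hf] at h
    omega
  have adj_of : ∀ a b : Fin k × Fin n, (f a b ∨ f b a) → (fromRel f).Adj a b := by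
    intro a b h
    rw [fromRel_adj]
    refine ⟨?_, h⟩
    rcases h with h | h
    · exact hRne a b h
    · exact (hRne b a h).symm
  constructor
  · refine ⟨?_, ?_, ?_⟩
    · -- G1 ≤ multipartite
      intro u w h
      rw [fromRel_adj] at h
      obtain ⟨-, h⟩ := h
      show u.1 ≠ w.1
      intro he
      have hv : (u.1 : ℕ) = (w.1 : ℕ) := by rw [he]
      simp only [hf] at h
      omega
    · -- CliqueFree 3
      intro s hs
      rw [is3Clique_iff] at hs
      obtain ⟨a, b, c, hab, hac, hbc, -⟩ := hs
      rw [fromRel_adj] at hab hac hbc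
      obtain ⟨-, hab⟩ := hab
      obtain ⟨-, hac⟩ := hac
      obtain ⟨-, hbc⟩ := hbc
      simp only [hf] at hab hac hbc
      omega
    · -- saturation
      intro u w hG hJ hcf
      have huw : (u.1 : ℕ) ≠ (w.1 : ℕ) := fun h => hG (Fin.val_injective h)
      have hne : u ≠ w := fun he => hG (by rw [he])
      have hnR : ¬ (f u w ∨ f w u) := fun h => hJ ((fromRel_adj _ u w).mpr ⟨hne, h⟩)
      simp only [hf, not_or] at hnR
      obtain ⟨hnR1, hnR2⟩ := hnR
      have tri : ∀ x : Fin k × Fin n, (fromRel f).Adj x u → (fromRel f).Adj x w → False := by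
        intro x h1 h2
        refine hcf {u, w, x} (is3Clique_triple_iff.mpr ⟨?_, ?_, ?_⟩)
        · exact Or.inr ((fromEdgeSet_adj _).mpr ⟨rfl, hne⟩)
        · exact Or.inl h1.symm
        · exact Or.inl h2.symm
      rcases Nat.lt_or_ge (u.1 : ℕ) 2 with hu | hu <;>
        rcases Nat.lt_or_ge (w.1 : ℕ) 2 with hw | hw
      · -- both in classes 0/1; necessarily both second coords 0
        refine tri (⟨2, by omega⟩, ⟨0, by omega⟩)
          (adj_of _ _ (Or.inl (Or.inr ⟨le_refl 2, by omega, by omega⟩)))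
          (adj_of _ _ (Or.inl (Or.inr ⟨le_refl 2, by omega, by omega⟩)))
      · -- u in class 0/1, w in class ≥ 2
        rcases (by omega : (u.1 : ℕ) = 0 ∨ (u.1 : ℕ) = 1) with hu0 | hu1
        · refine tri (⟨1, by omega⟩, ⟨0, by omega⟩)
            (adj_of _ _ (Or.inr (Or.inl ⟨hu0, rfl, fun hc => absurd hc.1 (by omega)⟩)))
            (adj_of _ _ (Or.inr (Or.inr ⟨hw, Or.inr rfl, rfl⟩)))
        · refine tri (⟨0, by omega⟩, ⟨0, by omega⟩)
            (adj_of _ _ (Or.inl (Or.inl ⟨rfl, hu1, fun hc => absurd hc.2 (by omega)⟩)))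
            (adj_of _ _ (Or.inr (Or.inr ⟨hw, Or.inl rfl, rfl⟩)))
      · -- u in class ≥ 2, w in class 0/1
        rcases (by omega : (w.1 : ℕ) = 0 ∨ (w.1 : ℕ) = 1) with hw0 | hw1
        · refine tri (⟨1, by omega⟩, ⟨0, by omega⟩)
            (adj_of _ _ (Or.inr (Or.inr ⟨hu, Or.inr rfl, rfl⟩)))
            (adj_of _ _ (Or.inr (Or.inl ⟨hw0, rfl, fun hc => absurd hc.1 (by omega)⟩)))
        · refine tri (⟨0, by omega⟩, ⟨0, by omega⟩)
            (adj_of _ _ (Or.inr (Or.inr ⟨hu, Or.inl rfl, rfl⟩)))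
            (adj_of _ _ (Or.inl (Or.inl ⟨rfl, hw1, fun hc => absurd hc.2 (by omega)⟩)))
      · -- both in classes ≥ 2
        exact tri (⟨0, by omega⟩, ⟨0, by omega⟩)
          (adj_of _ _ (Or.inr (Or.inr ⟨hu, Or.inl rfl, rfl⟩)))
          (adj_of _ _ (Or.inr (Or.inr ⟨hw, Or.inl rfl, rfl⟩)))
  · -- edge count
    set p0 : Fin k × Fin n := (⟨0, by omega⟩, ⟨0, by omega⟩) with hp0
    set p1 : Fin k × Fin n := (⟨1, by omega⟩, ⟨0, by omega⟩) with hp1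
    set S1 : Finset ((Fin k × Fin n) × (Fin k × Fin n)) :=
      ((({(⟨0, by omega⟩ : Fin k)} ×ˢ Finset.univ) ×ˢ
        ({(⟨1, by omega⟩ : Fin k)} ×ˢ Finset.univ)).erase (p0, p1)) with hS1
    set S2 : Finset ((Fin k × Fin n) × (Fin k × Fin n)) :=
      ((Finset.univ.filter fun a : Fin k => 2 ≤ (a : ℕ)) ×ˢ Finset.univ) ×ˢ
        ({p0, p1} : Finset (Fin k × Fin n)) with hS2
    set S : Finset ((Fin k × Fin n) × (Fin k × Fin n)) := S1 ∪ S2 with hS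
    have hmem : ∀ p : (Fin k × Fin n) × (Fin k × Fin n), p ∈ S ↔ f p.1 p.2 := by
      intro p
      simp only [hS, hS1, hS2, hp0, hp1, hf, Finset.mem_union, Finset.mem_erase,
        Finset.mem_product, Finset.mem_singleton, Finset.mem_filter, Finset.mem_univ,
        Finset.mem_insert, and_true, true_and, Prod.ext_iff, Fin.ext_iff, Fin.val_mk,
        ne_eq, not_and]
      omega
    have hA : (fromRel f).edgeSet = ↑(S.image fun p => s(p.1, p.2)) := by
      ext e
      induction e using Sym2.ind with
      | _ u w =>
        simp only [mem_edgeSet, Finset.coe_image, Set.mem_image, Finset.mem_coe, fromRel_adj]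
        constructor
        · rintro ⟨hne, h | h⟩
          · exact ⟨(u, w), (hmem (u, w)).mpr h, rfl⟩
          · exact ⟨(w, u), (hmem (w, u)).mpr h, Sym2.eq_swap⟩
        · rintro ⟨p, hp, he⟩
          have hfp := (hmem p).mp hp
          rw [Sym2.eq_iff] at he
          rcases he with ⟨h1, h2⟩ | ⟨h1, h2⟩
          · rw [h1, h2] at hfp
            exact ⟨hRne u w hfp, Or.inl hfp⟩
          · rw [h1, h2] at hfp
            exact ⟨(hRne w u hfp).symm, Or.inr hfp⟩
    have hinj : Set.InjOn (fun p : (Fin k × Fin n) × (Fin k × Fin n) => s(p.1, p.2)) ↑S := by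
      intro p hp q hq he
      have hfp := (hmem p).mp hp
      have hfq := (hmem q).mp hq
      simp only [Sym2.eq_iff] at he
      rcases he with ⟨h1, h2⟩ | ⟨h1, h2⟩
      · exact Prod.ext h1 h2
      · exfalso
        rw [← h1, ← h2] at hfq
        simp only [hf] at hfp hfq
        omega
    have hdisj : Disjoint S1 S2 := by
      rw [Finset.disjoint_left]
      intro p hq1 hq2
      simp only [hS1, hS2, hp0, hp1, Finset.mem_erase, Finset.mem_product,
        Finset.mem_singleton, Finset.mem_filter, Finset.mem_univ, Finset.mem_insert,
        and_true, true_and, Prod.ext_iff, Fin.ext_iff, Fin.val_mk, ne_eq] at hq1 hq2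
      omega
    have hcard1 : S1.card = n * n - 1 := by
      rw [hS1, Finset.card_erase_of_mem]
      · simp [Finset.card_product]
      · simp [hp0, hp1]
    have hfilt : (Finset.univ.filter fun a : Fin k => 2 ≤ (a : ℕ)).card = k - 2 := by
      have h2 : (Finset.univ.filter fun a : Fin k => ¬ 2 ≤ (a : ℕ)) =
          {(⟨0, by omega⟩ : Fin k), ⟨1, by omega⟩} := by
        ext a
        simp only [Finset.mem_filter, Finset.mem_univ, true_and, Finset.mem_insert,
          Finset.mem_singleton, Fin.ext_iff, Fin.val_mk, not_le]
        omega
      have h3 := Finset.card_filter_add_card_filter_not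
        (s := (Finset.univ : Finset (Fin k))) (fun a : Fin k => 2 ≤ (a : ℕ))
      rw [h2] at h3
      have h4 : ({(⟨0, by omega⟩ : Fin k), ⟨1, by omega⟩} : Finset (Fin k)).card = 2 := by
        rw [Finset.card_insert_of_notMem (by simp [Fin.ext_iff]), Finset.card_singleton]
      rw [h4, Finset.card_univ, Fintype.card_fin] at h3
      omega
    have hcard2 : S2.card = (k - 2) * n * 2 := by
      rw [hS2, Finset.card_product, Finset.card_product, hfilt, Finset.card_univ,
        Fintype.card_fin]
      have : ({p0, p1} : Finset (Fin k × Fin n)).card = 2 := by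
        rw [Finset.card_insert_of_notMem (by simp [hp0, hp1, Prod.ext_iff, Fin.ext_iff]),
          Finset.card_singleton]
      rw [this]
    have hcount : (fromRel f).edgeSet.ncard = (n * n - 1) + (k - 2) * n * 2 := by
      rw [hA, Set.ncard_coe_finset, Finset.card_image_of_injOn hinj, hS,
        Finset.card_union_of_disjoint hdisj, hcard1, hcard2]
    rw [hcount]
    have h1 : 1 ≤ n * n := by nlinarith
    have h2 : 2 ≤ k := by omega
    push_cast [h1, h2]
    ring
end

section
/- Let k ≥ 3 and n ≥ 2. Let G2 be the subgraph of K_k^n whose edges are: all pairs joining each vertex of V_1 ∖ {v_1^1} to v_2^1 and v_3^1, all pairs joining each vertex of V_2 ∖ {v_2^1} to v_1^1 and v_3^1, all pairs joining each vertex of V_3 ∖ {v_3^1} to v_1^1 and v_2^1, together with all pairs joining each vertex of V_4 ∪ ... ∪ V_k to v_1^1, v_2^1 and v_3^1. Then G2 is a K_3-saturated subgraph of K_k^n and the number of edges of G2 equals 3kn − 3n − 6. -/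
open SimpleGraph

section Aux

variable {k n : ℕ}

lemma cardH (hk : 3 ≤ k) :
    (Finset.univ.filter (fun a : Fin k => (a : ℕ) ≤ 2)).card = 3 := by
  have h0 : (0:ℕ) < k := by omega
  have h1 : (1:ℕ) < k := by omega
  have h2 : (2:ℕ) < k := by omega
  have : Finset.univ.filter (fun a : Fin k => (a : ℕ) ≤ 2)
      = {⟨0, h0⟩, ⟨1, h1⟩, ⟨2, h2⟩} := by
    ext a
    simp only [Finset.mem_filter, Finset.mem_univ, true_and, Finset.mem_insert,
      Finset.mem_singleton, Fin.ext_iff]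
    omega
  rw [this]
  rw [Finset.card_insert_of_notMem (by simp [Fin.ext_iff]),
    Finset.card_insert_of_notMem (by simp [Fin.ext_iff]), Finset.card_singleton]

lemma cardHc (hk : 3 ≤ k) :
    (Finset.univ.filter (fun a : Fin k => 3 ≤ (a : ℕ))).card = k - 3 := by
  have := Finset.card_filter_add_card_filter_not
    (s := (Finset.univ : Finset (Fin k))) (p := fun a : Fin k => (a : ℕ) ≤ 2)
  rw [cardH hk] at this
  have he : Finset.univ.filter (fun a : Fin k => 3 ≤ (a : ℕ))
      = Finset.univ.filter (fun a : Fin k => ¬ (a : ℕ) ≤ 2) := by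
    apply Finset.filter_congr; intro x _; simp; omega
  rw [he]
  simp only [Finset.card_univ, Fintype.card_fin] at this
  omega

lemma cardNz (hn : 1 ≤ n) :
    (Finset.univ.filter (fun b : Fin n => (b : ℕ) ≠ 0)).card = n - 1 := by
  have := Finset.card_filter_add_card_filter_not
    (s := (Finset.univ : Finset (Fin n))) (p := fun b : Fin n => (b : ℕ) = 0)
  have h0 : (0:ℕ) < n := by omega
  have he : Finset.univ.filter (fun b : Fin n => (b : ℕ) = 0) = {⟨0, h0⟩} := by
    ext b
    simp only [Finset.mem_filter, Finset.mem_univ, true_and, Finset.mem_singleton,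
      Fin.ext_iff]
  rw [he] at this
  have he2 : Finset.univ.filter (fun b : Fin n => (b : ℕ) ≠ 0)
      = Finset.univ.filter (fun b : Fin n => ¬ (b : ℕ) = 0) := rfl
  rw [he2]
  simp only [Finset.card_singleton, Finset.card_univ, Fintype.card_fin] at this
  omega

end Aux

/-- Construction 2 -/
theorem stmt_1 (k n : ℕ) (hk : 3 ≤ k) (hn : 2 ≤ n)
    (G2 : SimpleGraph (Fin k × Fin n))
    (hG2 : G2 = SimpleGraph.fromRel (fun u w =>
      (u.1 : ℕ) ≤ 2 ∧ (u.2 : ℕ) = 0 ∧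
        (((w.1 : ℕ) ≤ 2 ∧ u.1 ≠ w.1 ∧ (w.2 : ℕ) ≠ 0) ∨ 3 ≤ (w.1 : ℕ)))) :
    IsSatIn 3 G2 (multipartite k n) ∧
      (G2.edgeSet.ncard : ℤ) = 3 * k * n - 3 * n - 6 := by
  subst hG2
  set r : (Fin k × Fin n) → (Fin k × Fin n) → Prop := fun u w =>
      (u.1 : ℕ) ≤ 2 ∧ (u.2 : ℕ) = 0 ∧
        (((w.1 : ℕ) ≤ 2 ∧ u.1 ≠ w.1 ∧ (w.2 : ℕ) ≠ 0) ∨ 3 ≤ (w.1 : ℕ)) with hr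
  have hz : (0:ℕ) < n := by omega
  set z : Fin n := ⟨0, hz⟩ with hzdef
  -- adjacency from the relation
  have adj_of_r : ∀ u w, r u w → (SimpleGraph.fromRel r).Adj u w := by
    intro u w h
    rw [fromRel_adj]
    refine ⟨?_, Or.inl h⟩
    obtain ⟨h1, h2, (⟨h3, h4, h5⟩ | h3)⟩ := h
    · intro he; subst he; omega
    · intro he; subst he; omega
  have hubAdj : ∀ u w : Fin k × Fin n, (u.1 : ℕ) ≤ 2 → (u.2 : ℕ) = 0 →
      (((w.1 : ℕ) ≤ 2 ∧ (w.1 : ℕ) ≠ (u.1 : ℕ) ∧ (w.2 : ℕ) ≠ 0) ∨ 3 ≤ (w.1 : ℕ)) →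
      (SimpleGraph.fromRel r).Adj u w := by
    intro u w h1 h2 h3
    apply adj_of_r
    refine ⟨h1, h2, ?_⟩
    rcases h3 with ⟨ha, hb, hc⟩ | h
    · exact Or.inl ⟨ha, fun he => hb (by rw [he]), hc⟩
    · exact Or.inr h
  constructor
  · refine ⟨?_, ?_, ?_⟩
    · -- subgraph
      intro u w h
      show u.1 ≠ w.1
      rw [fromRel_adj] at h
      obtain ⟨hne, h | h⟩ := h <;>
        obtain ⟨h1, h2, (⟨h3, h4, h5⟩ | h3)⟩ := h <;>
        simp only [Ne, Fin.ext_iff] at * <;> omega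
    · -- triangle-free
      have key : ∀ x y, (SimpleGraph.fromRel r).Adj x y →
          ((x.1 : ℕ) ≤ 2 ∧ (x.2 : ℕ) = 0) ∨ ((y.1 : ℕ) ≤ 2 ∧ (y.2 : ℕ) = 0) := by
        intro x y h
        rw [fromRel_adj] at h
        obtain ⟨_, h | h⟩ := h
        · exact Or.inl ⟨h.1, h.2.1⟩
        · exact Or.inr ⟨h.1, h.2.1⟩
      have key2 : ∀ x y, (SimpleGraph.fromRel r).Adj x y →
          ¬ (((x.1 : ℕ) ≤ 2 ∧ (x.2 : ℕ) = 0) ∧ ((y.1 : ℕ) ≤ 2 ∧ (y.2 : ℕ) = 0)) := by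
        intro x y h ⟨⟨ha1, ha2⟩, hb1, hb2⟩
        rw [fromRel_adj] at h
        obtain ⟨_, h | h⟩ := h <;>
          obtain ⟨h1, h2, (⟨h3, h4, h5⟩ | h3)⟩ := h <;> omega
      intro t ht
      obtain ⟨a, b, c, hab, hac, hbc, rfl⟩ := Finset.card_eq_three.mp ht.2
      have h1 : (SimpleGraph.fromRel r).Adj a b := ht.1 (by simp) (by simp) hab
      have h2 : (SimpleGraph.fromRel r).Adj a c := ht.1 (by simp) (by simp) hac
      have h3 : (SimpleGraph.fromRel r).Adj b c := ht.1 (by simp) (by simp) hbc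
      rcases key a b h1 with ha | hb
      · rcases key b c h3 with hb | hc
        · exact key2 a b h1 ⟨ha, hb⟩
        · exact key2 a c h2 ⟨ha, hc⟩
      · rcases key a c h2 with ha | hc
        · exact key2 a b h1 ⟨ha, hb⟩
        · exact key2 b c h3 ⟨hb, hc⟩
    · -- saturated
      intro u w hmw hnad
      show ¬ _
      have huw : u.1 ≠ w.1 := hmw
      have huwv : (u.1 : ℕ) ≠ (w.1 : ℕ) := fun h => huw (Fin.ext h)
      have hneq : u ≠ w := fun h => huw (by rw [h])
      rw [fromRel_adj, not_and, not_or] at hnad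
      obtain ⟨hru, hrw⟩ := hnad hneq
      rw [hr] at hru hrw
      simp only [not_and, not_or, not_not] at hru hrw
      have hx : ∃ x, (SimpleGraph.fromRel r).Adj u x ∧ (SimpleGraph.fromRel r).Adj w x := by
        by_cases hu2 : (u.1 : ℕ) ≤ 2
        · by_cases hu0 : (u.2 : ℕ) = 0
          · by_cases hw2 : (w.1 : ℕ) ≤ 2
            · by_cases hw0 : (w.2 : ℕ) = 0
              · -- both hubs
                refine ⟨((⟨3 - (u.1:ℕ) - (w.1:ℕ), by omega⟩ : Fin k), (⟨1, by omega⟩ : Fin n)), ?_, ?_⟩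
                · exact hubAdj u _ hu2 hu0 (Or.inl
                    ⟨show 3 - (u.1:ℕ) - (w.1:ℕ) ≤ 2 by omega,
                     show 3 - (u.1:ℕ) - (w.1:ℕ) ≠ (u.1:ℕ) by omega,
                     show (1:ℕ) ≠ 0 by omega⟩)
                · exact hubAdj w _ hw2 hw0 (Or.inl
                    ⟨show 3 - (u.1:ℕ) - (w.1:ℕ) ≤ 2 by omega,
                     show 3 - (u.1:ℕ) - (w.1:ℕ) ≠ (w.1:ℕ) by omega,
                     show (1:ℕ) ≠ 0 by omega⟩)
              · exact absurd ((hru hu2 hu0).1 hw2 huw) hw0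
            · exact absurd (show 3 ≤ (w.1:ℕ) by omega) (hru hu2 hu0).2
          · by_cases hw2 : (w.1 : ℕ) ≤ 2
            · by_cases hw0 : (w.2 : ℕ) = 0
              · exact absurd ((hrw hw2 hw0).1 hu2 huw.symm) hu0
              · -- two low non-hubs
                refine ⟨((⟨3 - (u.1:ℕ) - (w.1:ℕ), by omega⟩ : Fin k), z), ?_, ?_⟩
                · exact (hubAdj _ u (show 3 - (u.1:ℕ) - (w.1:ℕ) ≤ 2 by omega) rfl
                    (Or.inl ⟨hu2, show (u.1:ℕ) ≠ 3 - (u.1:ℕ) - (w.1:ℕ) by omega, hu0⟩)).symm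
                · exact (hubAdj _ w (show 3 - (u.1:ℕ) - (w.1:ℕ) ≤ 2 by omega) rfl
                    (Or.inl ⟨hw2, show (w.1:ℕ) ≠ 3 - (u.1:ℕ) - (w.1:ℕ) by omega, hw0⟩)).symm
            · -- u low non-hub, w high
              refine ⟨((⟨if (u.1:ℕ) = 0 then 1 else 0, by split <;> omega⟩ : Fin k), z), ?_, ?_⟩
              · refine (hubAdj _ u (show (if (u.1:ℕ) = 0 then 1 else 0) ≤ 2 by split <;> omega) rfl
                  (Or.inl ⟨hu2, show (u.1:ℕ) ≠ (if (u.1:ℕ) = 0 then 1 else 0) by split <;> omega, hu0⟩)).symm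
              · exact (hubAdj _ w (show (if (u.1:ℕ) = 0 then 1 else 0) ≤ 2 by split <;> omega) rfl
                  (Or.inr (show 3 ≤ (w.1:ℕ) by omega))).symm
        · by_cases hw2 : (w.1 : ℕ) ≤ 2
          · by_cases hw0 : (w.2 : ℕ) = 0
            · exact absurd (show 3 ≤ (u.1:ℕ) by omega) (hrw hw2 hw0).2
            · -- w low non-hub, u high
              refine ⟨((⟨if (w.1:ℕ) = 0 then 1 else 0, by split <;> omega⟩ : Fin k), z), ?_, ?_⟩
              · exact (hubAdj _ u (show (if (w.1:ℕ) = 0 then 1 else 0) ≤ 2 by split <;> omega) rfl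
                  (Or.inr (show 3 ≤ (u.1:ℕ) by omega))).symm
              · refine (hubAdj _ w (show (if (w.1:ℕ) = 0 then 1 else 0) ≤ 2 by split <;> omega) rfl
                  (Or.inl ⟨hw2, show (w.1:ℕ) ≠ (if (w.1:ℕ) = 0 then 1 else 0) by split <;> omega, hw0⟩)).symm
          · -- both high
            refine ⟨((⟨0, by omega⟩ : Fin k), z), ?_, ?_⟩
            · exact (hubAdj _ u (show (0:ℕ) ≤ 2 by omega) rfl
                (Or.inr (show 3 ≤ (u.1:ℕ) by omega))).symm
            · exact (hubAdj _ w (show (0:ℕ) ≤ 2 by omega) rfl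
                (Or.inr (show 3 ≤ (w.1:ℕ) by omega))).symm
      obtain ⟨x, hux, hwx⟩ := hx
      intro hcf
      apply hcf {u, w, x}
      rw [is3Clique_triple_iff]
      exact ⟨Or.inr (by simp [fromEdgeSet_adj, hneq]), Or.inl hux, Or.inl hwx⟩
  · -- edge count
    classical
    set S : Finset (Fin k × (Fin k × Fin n)) := Finset.univ.filter
      (fun p => (p.1 : ℕ) ≤ 2 ∧
        (((p.2.1 : ℕ) ≤ 2 ∧ p.1 ≠ p.2.1 ∧ (p.2.2 : ℕ) ≠ 0) ∨ 3 ≤ (p.2.1 : ℕ))) with hS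
    set g : Fin k × (Fin k × Fin n) → Sym2 (Fin k × Fin n) :=
      fun p => s((p.1, z), p.2) with hg
    have hset : (SimpleGraph.fromRel r).edgeSet = g '' ↑S := by
      ext e
      induction e using Sym2.ind with
      | _ a b =>
        rw [mem_edgeSet]
        constructor
        · intro h
          rw [fromRel_adj] at h
          obtain ⟨hne, ⟨h1, h2, h3⟩ | ⟨h1, h2, h3⟩⟩ := h
          · refine ⟨(a.1, b), ?_, ?_⟩
            · simp only [hS, Finset.coe_filter, Set.mem_setOf_eq, Finset.mem_univ, true_and]
              exact ⟨h1, h3⟩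
            · show s((a.1, z), b) = s(a, b)
              have hzz : ((a.1, z) : Fin k × Fin n) = a := Prod.ext rfl (Fin.ext h2.symm)
              rw [hzz]
          · refine ⟨(b.1, a), ?_, ?_⟩
            · simp only [hS, Finset.coe_filter, Set.mem_setOf_eq, Finset.mem_univ, true_and]
              exact ⟨h1, h3⟩
            · show s((b.1, z), a) = s(a, b)
              have hzz : ((b.1, z) : Fin k × Fin n) = b := Prod.ext rfl (Fin.ext h2.symm)
              rw [hzz, Sym2.eq_swap]
        · rintro ⟨p, hp, hpe⟩
          simp only [hS, Finset.coe_filter, Set.mem_setOf_eq, Finset.mem_univ, true_and] at hp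
          have hadj : (SimpleGraph.fromRel r).Adj (p.1, z) p.2 :=
            adj_of_r _ _ ⟨hp.1, rfl, hp.2⟩
          rw [show g p = s((p.1, z), p.2) from rfl, Sym2.eq_iff] at hpe
          rcases hpe with ⟨he1, he2⟩ | ⟨he1, he2⟩
          · rw [← he1, ← he2]; exact hadj
          · rw [← he1, ← he2]; exact hadj.symm
    have hinj : Set.InjOn g ↑S := by
      intro p hp q hq hpq
      simp only [hS, Finset.coe_filter, Set.mem_setOf_eq, Finset.mem_univ, true_and] at hp hq
      rw [hg] at hpq
      simp only [Sym2.eq_iff] at hpq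
      rcases hpq with ⟨he1, he2⟩ | ⟨he1, he2⟩
      · have h1 : p.1 = q.1 := congrArg (fun v : Fin k × Fin n => v.1) he1
        exact Prod.ext h1 he2
      · exfalso
        rcases hq.2 with ⟨_, _, hnz⟩ | h3
        · exact hnz (by rw [← he1])
        · have hsame : (q.2.1 : ℕ) = (p.1 : ℕ) := by rw [← he1]
          have := hp.1
          omega
    rw [hset, Set.ncard_image_of_injOn hinj, Set.ncard_coe_finset]
    classical
    set H : Finset (Fin k) := Finset.univ.filter (fun a : Fin k => (a : ℕ) ≤ 2) with hH
    set W : Fin k → Finset (Fin k × Fin n) := fun j => Finset.univ.filter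
      (fun w => ((w.1 : ℕ) ≤ 2 ∧ j ≠ w.1 ∧ (w.2 : ℕ) ≠ 0) ∨ 3 ≤ (w.1 : ℕ)) with hW
    have hSb : S = H.biUnion (fun j => {j} ×ˢ W j) := by
      ext p
      simp only [hS, Finset.mem_filter, Finset.mem_univ, true_and, Finset.mem_biUnion,
        Finset.mem_product, Finset.mem_singleton, hH, hW]
      constructor
      · rintro ⟨h1, h2⟩; exact ⟨p.1, h1, rfl, h2⟩
      · rintro ⟨j, hj, h1, h2⟩; subst h1; exact ⟨hj, h2⟩
    have hdisj : ∀ x ∈ H, ∀ y ∈ H, x ≠ y → Disjoint ({x} ×ˢ W x) ({y} ×ˢ W y) := by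
      intro x _ y _ hxy
      rw [Finset.disjoint_left]
      rintro p hp1 hp2
      rw [Finset.mem_product, Finset.mem_singleton] at hp1 hp2
      exact hxy (hp1.1 ▸ hp2.1 ▸ rfl)
    have hWcard : ∀ j ∈ H, (W j).card = 2 * (n - 1) + (k - 3) * n := by
      intro j hj
      have hj2 : (j : ℕ) ≤ 2 := by simpa [hH] using hj
      have hWeq : W j = ((H.erase j) ×ˢ (Finset.univ.filter fun b : Fin n => (b : ℕ) ≠ 0))
          ∪ ((Finset.univ.filter fun a : Fin k => 3 ≤ (a : ℕ)) ×ˢ Finset.univ) := by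
        ext w
        simp only [hW, hH, Finset.mem_filter, Finset.mem_univ, true_and, Finset.mem_union,
          Finset.mem_product, Finset.mem_erase, and_true]
        constructor
        · rintro (⟨h1, h2, h3⟩ | h)
          · exact Or.inl ⟨⟨h2.symm, h1⟩, h3⟩
          · exact Or.inr h
        · rintro (⟨⟨h2, h1⟩, h3⟩ | h)
          · exact Or.inl ⟨h1, h2.symm, h3⟩
          · exact Or.inr h
      have hd : Disjoint ((H.erase j) ×ˢ (Finset.univ.filter fun b : Fin n => (b : ℕ) ≠ 0))
          ((Finset.univ.filter fun a : Fin k => 3 ≤ (a : ℕ)) ×ˢ Finset.univ) := by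
        rw [Finset.disjoint_left]
        rintro w h1 h2
        rw [Finset.mem_product] at h1 h2
        rw [Finset.mem_erase] at h1
        have hw1 : (w.1 : ℕ) ≤ 2 := by
          have := h1.1.2
          simp only [hH, Finset.mem_filter] at this
          exact this.2
        have hw2 : 3 ≤ (w.1 : ℕ) := by
          have := h2.1
          simp only [Finset.mem_filter] at this
          exact this.2
        omega
      rw [hWeq, Finset.card_union_of_disjoint hd, Finset.card_product, Finset.card_product,
        Finset.card_erase_of_mem hj, hH, cardH hk, cardNz (by omega : 1 ≤ n),
        cardHc hk, Finset.card_univ, Fintype.card_fin]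
    have hcard : S.card = 3 * (2 * (n - 1) + (k - 3) * n) := by
      rw [hSb, Finset.card_biUnion hdisj]
      rw [Finset.sum_congr rfl (fun j hj => by
        rw [Finset.card_product, Finset.card_singleton, one_mul, hWcard j hj])]
      rw [Finset.sum_const, hH, cardH hk, smul_eq_mul]
    rw [hcard]
    obtain ⟨l, rfl⟩ : ∃ l, k = l + 3 := ⟨k - 3, by omega⟩
    obtain ⟨m, rfl⟩ : ∃ m, n = m + 2 := ⟨n - 2, by omega⟩
    have e1 : m + 2 - 1 = m + 1 := by omega
    have e2 : l + 3 - 3 = l := by omega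
    rw [e1, e2]
    push_cast
    ring
end

section
/- For all k ≥ 3 and n ≥ 2, there exists a K_3-saturated subgraph of K_k^n with at most min{2kn + n^2 − 4n − 1, 3kn − 3n − 6} edges; that is, sat(K_3, K_k^n) ≤ min{2kn + n^2 − 4n − 1, 3kn − 3n − 6}. -/
open SimpleGraph

set_option linter.unusedVariables false


lemma not_cf {V : Type*} [DecidableEq V] {J : SimpleGraph V} {u w c : V} (huw : u ≠ w)
    (h1 : J.Adj u c) (h2 : J.Adj w c) :
    ¬ (J ⊔ SimpleGraph.fromEdgeSet {s(u, w)}).CliqueFree 3 := by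
  intro h
  refine h {u, w, c} (is3Clique_triple_iff.mpr ⟨?_, ?_, ?_⟩)
  · exact Or.inr (by simp [huw])
  · exact Or.inl h1
  · exact Or.inl h2


def graphB (k n : ℕ) (H : Set (Fin k × Fin n)) : SimpleGraph (Fin k × Fin n) where
  Adj u w := u.1 ≠ w.1 ∧ ((u ∈ H ∧ w ∉ H) ∨ (w ∈ H ∧ u ∉ H))
  symm := ⟨fun u w h => ⟨h.1.symm, h.2.symm⟩⟩
  loopless := ⟨fun u h => h.1 rfl⟩

lemma graphB_adj {k n : ℕ} (H : Set (Fin k × Fin n)) (u w : Fin k × Fin n) :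
    (graphB k n H).Adj u w ↔ u.1 ≠ w.1 ∧ ((u ∈ H ∧ w ∉ H) ∨ (w ∈ H ∧ u ∉ H)) := Iff.rfl

lemma graphB_cliqueFree {k n : ℕ} (H : Set (Fin k × Fin n)) :
    (graphB k n H).CliqueFree 3 := by
  intro s hs
  obtain ⟨x, y, z, hxy, hxz, hyz, rfl⟩ := is3Clique_iff.mp hs
  obtain ⟨-, h1⟩ := hxy
  obtain ⟨-, h2⟩ := hxz
  obtain ⟨-, h3⟩ := hyz
  tauto

/-- Construction A : two hubs `a0, a1`, each joined to everything outside its own part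
except the other hub, together with complete bipartite between part(a0)∖{a0} and
part(a1)∖{a1}. -/
def hubs {k n : ℕ} (i0 i1 i2 : Fin k) (z0 : Fin n) : Set (Fin k × Fin n) :=
  {(i0, z0), (i1, z0), (i2, z0)}

lemma graphB_sat {k n : ℕ} (i0 i1 i2 : Fin k) (z0 z1 : Fin n)
    (hd01 : i0 ≠ i1) (hd02 : i0 ≠ i2) (hd12 : i1 ≠ i2) (hz : z0 ≠ z1)
    (u w : Fin k × Fin n) (hne : u.1 ≠ w.1)
    (hnadj : ¬ (graphB k n (hubs i0 i1 i2 z0)).Adj u w) :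
    ∃ c, (graphB k n (hubs i0 i1 i2 z0)).Adj u c ∧
      (graphB k n (hubs i0 i1 i2 z0)).Adj w c := by
  set H : Set (Fin k × Fin n) := hubs i0 i1 i2 z0 with hH
  have hz1 : ∀ j : Fin k, (j, z1) ∉ H := by
    intro j hj
    simp only [hH, hubs, Set.mem_insert_iff, Set.mem_singleton_iff] at hj
    rcases hj with h | h | h <;> exact hz (congrArg Prod.snd h).symm
  by_cases hu : u ∈ H <;> by_cases hw : w ∈ H
  · -- both hubs : take the third hub's part with the other row
    have mk : ∀ (a : Fin k × Fin n) (j : Fin k), a ∈ H → a.1 ≠ j →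
        (graphB k n H).Adj a (j, z1) := fun a j ha hj => ⟨hj, Or.inl ⟨ha, hz1 j⟩⟩
    have hu' := hu
    have hw' := hw
    simp only [hH, hubs, Set.mem_insert_iff, Set.mem_singleton_iff] at hu' hw'
    rcases hu' with rfl | rfl | rfl <;> rcases hw' with rfl | rfl | rfl <;>
      first
        | exact absurd rfl hne
        | exact ⟨(i2, z1), mk _ _ hu (by exact hd02), mk _ _ hw (by exact hd12)⟩
        | exact ⟨(i1, z1), mk _ _ hu (by exact hd01), mk _ _ hw (by exact hd12.symm)⟩
        | exact ⟨(i0, z1), mk _ _ hu (by exact hd01.symm), mk _ _ hw (by exact hd02.symm)⟩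
        | exact ⟨(i2, z1), mk _ _ hu (by exact hd12), mk _ _ hw (by exact hd02)⟩
        | exact ⟨(i1, z1), mk _ _ hu (by exact hd12.symm), mk _ _ hw (by exact hd01)⟩
        | exact ⟨(i0, z1), mk _ _ hu (by exact hd02.symm), mk _ _ hw (by exact hd01.symm)⟩
  · exact absurd ⟨hne, Or.inl ⟨hu, hw⟩⟩ hnadj
  · exact absurd ⟨hne, Or.inr ⟨hw, hu⟩⟩ hnadj
  · -- neither is a hub : take a hub in a third part
    have pick : ∃ j : Fin k, ((j, z0) ∈ H) ∧ j ≠ u.1 ∧ j ≠ w.1 := by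
      by_cases h0 : i0 ≠ u.1 ∧ i0 ≠ w.1
      · exact ⟨i0, by simp [hH, hubs], h0⟩
      by_cases h1 : i1 ≠ u.1 ∧ i1 ≠ w.1
      · exact ⟨i1, by simp [hH, hubs], h1⟩
      rw [not_and_or, not_not, not_not] at h0 h1
      refine ⟨i2, by simp [hH, hubs], ?_, ?_⟩
      · intro h2
        rcases h0 with h0 | h0 <;> rcases h1 with h1 | h1
        · exact hd01 (h0.trans h1.symm)
        · exact hd02 (h0.trans h2.symm)
        · exact hd12 (h1.trans h2.symm)
        · exact hd01 (h0.trans h1.symm)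
      · intro h2
        rcases h0 with h0 | h0 <;> rcases h1 with h1 | h1
        · exact hd01 (h0.trans h1.symm)
        · exact hd12 (h1.trans h2.symm)
        · exact hd02 (h0.trans h2.symm)
        · exact hd02 (h0.trans h2.symm)
    obtain ⟨j, hjH, hju, hjw⟩ := pick
    exact ⟨(j, z0), ⟨hju.symm, Or.inr ⟨hjH, hu⟩⟩, ⟨hjw.symm, Or.inr ⟨hjH, hw⟩⟩⟩

def graphA (k n : ℕ) (a0 a1 : Fin k × Fin n) : SimpleGraph (Fin k × Fin n) where
  Adj u w := u.1 ≠ w.1 ∧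
    (((u = a0 ∨ w = a0) ∧ u ≠ a1 ∧ w ≠ a1) ∨
     ((u = a1 ∨ w = a1) ∧ u ≠ a0 ∧ w ≠ a0) ∨
     ((u.1 = a0.1 ∨ u.1 = a1.1) ∧ (w.1 = a0.1 ∨ w.1 = a1.1) ∧
       u ≠ a0 ∧ u ≠ a1 ∧ w ≠ a0 ∧ w ≠ a1))
  symm := ⟨fun u w h => ⟨h.1.symm, by tauto⟩⟩
  loopless := ⟨fun u h => h.1 rfl⟩

lemma graphA_swap (k n : ℕ) (a0 a1 : Fin k × Fin n) :
    graphA k n a0 a1 = graphA k n a1 a0 := by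
  ext u w
  show _ ∧ _ ↔ _ ∧ _
  tauto

lemma graphA_aux {k n : ℕ} {a0 a1 : Fin k × Fin n} (y z : Fin k × Fin n)
    (hxy : (graphA k n a0 a1).Adj a0 y) (hxz : (graphA k n a0 a1).Adj a0 z)
    (hyz : (graphA k n a0 a1).Adj y z) : False := by
  obtain ⟨e1, h1⟩ := hxy
  obtain ⟨e2, h2⟩ := hxz
  obtain ⟨e3, h3⟩ := hyz
  have hy1 : y.1 ≠ a0.1 := Ne.symm e1
  have hz1 : z.1 ≠ a0.1 := Ne.symm e2
  have hy0 : y ≠ a0 := fun h => hy1 (by rw [h])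
  have hz0 : z ≠ a0 := fun h => hz1 (by rw [h])
  have hy2 : y ≠ a1 := by
    rcases h1 with ⟨_, _, h⟩ | ⟨_, h, _⟩ | ⟨_, _, h, _⟩
    exacts [h, absurd rfl h, absurd rfl h]
  have hz2 : z ≠ a1 := by
    rcases h2 with ⟨_, _, h⟩ | ⟨_, h, _⟩ | ⟨_, _, h, _⟩
    exacts [h, absurd rfl h, absurd rfl h]
  rcases h3 with ⟨h, _, _⟩ | ⟨h, _, _⟩ | ⟨hy, hz, _⟩
  · rcases h with h | h
    exacts [hy0 h, hz0 h]
  · rcases h with h | h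
    exacts [hy2 h, hz2 h]
  · rcases hy with h | h <;> rcases hz with h' | h' <;>
      first
        | exact hy1 h
        | exact hz1 h'
        | exact e3 (h.trans h'.symm)

lemma graphA_cliqueFree {k n : ℕ} (a0 a1 : Fin k × Fin n) :
    (graphA k n a0 a1).CliqueFree 3 := by
  intro s hs
  obtain ⟨x, y, z, hxy, hxz, hyz, rfl⟩ := is3Clique_iff.mp hs
  have k0 : ∀ u v w : Fin k × Fin n, (graphA k n a0 a1).Adj u v →
      (graphA k n a0 a1).Adj u w → (graphA k n a0 a1).Adj v w → u ≠ a0 := by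
    intro u v w h1 h2 h3 h
    rw [h] at h1 h2
    exact graphA_aux v w h1 h2 h3
  have k1 : ∀ u v w : Fin k × Fin n, (graphA k n a0 a1).Adj u v →
      (graphA k n a0 a1).Adj u w → (graphA k n a0 a1).Adj v w → u ≠ a1 := by
    intro u v w h1 h2 h3 h
    rw [h] at h1 h2
    rw [graphA_swap] at h1 h2 h3
    exact graphA_aux v w h1 h2 h3
  have hx0 := k0 x y z hxy hxz hyz
  have hy0 := k0 y x z hxy.symm hyz hxz
  have hz0 := k0 z x y hxz.symm hyz.symm hxy
  have hx1 := k1 x y z hxy hxz hyz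
  have hy1 := k1 y x z hxy.symm hyz hxz
  have hz1 := k1 z x y hxz.symm hyz.symm hxy
  obtain ⟨e1, h1⟩ := hxy
  obtain ⟨e2, h2⟩ := hxz
  obtain ⟨e3, h3⟩ := hyz
  have px : x.1 = a0.1 ∨ x.1 = a1.1 := by
    rcases h1 with ⟨h, _, _⟩ | ⟨h, _, _⟩ | ⟨h, _⟩
    · rcases h with h | h; exacts [absurd h hx0, absurd h hy0]
    · rcases h with h | h; exacts [absurd h hx1, absurd h hy1]
    · exact h
  have py : y.1 = a0.1 ∨ y.1 = a1.1 := by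
    rcases h3 with ⟨h, _, _⟩ | ⟨h, _, _⟩ | ⟨h, _⟩
    · rcases h with h | h; exacts [absurd h hy0, absurd h hz0]
    · rcases h with h | h; exacts [absurd h hy1, absurd h hz1]
    · exact h
  have pz : z.1 = a0.1 ∨ z.1 = a1.1 := by
    rcases h2 with ⟨h, _, _⟩ | ⟨h, _, _⟩ | ⟨_, h, _⟩
    · rcases h with h | h; exacts [absurd h hx0, absurd h hz0]
    · rcases h with h | h; exacts [absurd h hx1, absurd h hz1]
    · exact h
  rcases px with h | h <;> rcases py with h' | h' <;> rcases pz with h'' | h'' <;>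
    first
      | exact e1 (h.trans h'.symm)
      | exact e2 (h.trans h''.symm)
      | exact e3 (h'.trans h''.symm)

lemma graphA_sat {k n : ℕ} (i0 i1 i2 : Fin k) (z0 : Fin n)
    (hd01 : i0 ≠ i1) (hd02 : i0 ≠ i2) (hd12 : i1 ≠ i2)
    (u w : Fin k × Fin n) (hne : u.1 ≠ w.1)
    (hnadj : ¬ (graphA k n (i0, z0) (i1, z0)).Adj u w) :
    ∃ c, (graphA k n (i0, z0) (i1, z0)).Adj u c ∧
      (graphA k n (i0, z0) (i1, z0)).Adj w c := by
  set a0 : Fin k × Fin n := (i0, z0) with ha0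
  set a1 : Fin k × Fin n := (i1, z0) with ha1
  have hA01 : a0 ≠ a1 := fun h => hd01 (congrArg Prod.fst h)
  have vne : ∀ (v : Fin k × Fin n) (i : Fin k) (z' : Fin n), v.1 ≠ i → v ≠ (i, z') :=
    fun v i z' h h' => h (congrArg Prod.fst h')
  have adj0 : ∀ v : Fin k × Fin n, v.1 ≠ i0 → v ≠ a1 → (graphA k n a0 a1).Adj v a0 :=
    fun v h h' => ⟨h, Or.inl ⟨Or.inr rfl, h', hA01⟩⟩
  have adj1 : ∀ v : Fin k × Fin n, v.1 ≠ i1 → v ≠ a0 → (graphA k n a0 a1).Adj v a1 :=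
    fun v h h' => ⟨h, Or.inr (Or.inl ⟨Or.inr rfl, h', hA01.symm⟩)⟩
  by_cases hu0 : u.1 = i0 <;> by_cases hu1 : u.1 = i1 <;>
    by_cases hw0 : w.1 = i0 <;> by_cases hw1 : w.1 = i1
  -- resolve impossible combinations (u.1 = i0 = i1 or similar, or u.1 = w.1)
  any_goals (exfalso; first | (apply hd01; rw [← hu0, hu1]) | (apply hd01; rw [← hw0, hw1]) | (apply hne; rw [hu0, hw0]) | (apply hne; rw [hu1, hw1]))
  -- case u.1 = i0, w.1 = i1
  · by_cases hua : u = a0 <;> by_cases hwa : w = a1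
    · refine ⟨(i2, z0), ⟨by rw [hu0]; exact hd02, Or.inl ⟨Or.inl hua, by rw [hua]; exact hA01,
        vne _ _ _ (by exact hd12.symm)⟩⟩, ⟨by rw [hw1]; exact hd12, Or.inr (Or.inl
        ⟨Or.inl hwa, by rw [hwa]; exact hA01.symm, vne _ _ _ (by exact hd02.symm)⟩)⟩⟩
    · exact absurd ⟨hne, Or.inl ⟨Or.inl hua, by rw [hua]; exact hA01, hwa⟩⟩ hnadj
    · exact absurd ⟨hne, Or.inr (Or.inl ⟨Or.inr hwa, hua, by rw [hwa]; exact hA01.symm⟩)⟩ hnadj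
    · exact absurd ⟨hne, Or.inr (Or.inr ⟨Or.inl hu0, Or.inr hw1, hua,
        vne _ _ _ (by rw [hu0]; exact hd01), vne _ _ _ (by rw [hw1]; exact hd01.symm),
        hwa⟩)⟩ hnadj
  -- case u.1 = i0, w outside both parts
  · by_cases hua : u = a0
    · exact absurd ⟨hne, Or.inl ⟨Or.inl hua, by rw [hua]; exact hA01, vne _ _ _ hw1⟩⟩ hnadj
    · exact ⟨a1, adj1 u (by rw [hu0]; exact hd01) hua,
        adj1 w hw1 (vne _ _ _ hw0)⟩
  -- case u.1 = i1, w.1 = i0  (mirror of the (i0, i1) case)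
  · by_cases hua : u = a1 <;> by_cases hwa : w = a0
    · refine ⟨(i2, z0), ⟨by rw [hu1]; exact hd12, Or.inr (Or.inl ⟨Or.inl hua,
        by rw [hua]; exact hA01.symm, vne _ _ _ (by exact hd02.symm)⟩)⟩,
        ⟨by rw [hw0]; exact hd02, Or.inl ⟨Or.inl hwa, by rw [hwa]; exact hA01,
        vne _ _ _ (by exact hd12.symm)⟩⟩⟩
    · exact absurd ⟨hne, Or.inr (Or.inl ⟨Or.inl hua, by rw [hua]; exact hA01.symm, hwa⟩)⟩ hnadj
    · exact absurd ⟨hne, Or.inl ⟨Or.inr hwa, hua, by rw [hwa]; exact hA01⟩⟩ hnadj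
    · exact absurd ⟨hne, Or.inr (Or.inr ⟨Or.inr hu1, Or.inl hw0,
        vne _ _ _ (by rw [hu1]; exact hd01.symm), hua, hwa,
        vne _ _ _ (by rw [hw0]; exact hd01)⟩)⟩ hnadj
  -- case u.1 = i1, w outside both parts
  · by_cases hua : u = a1
    · exact absurd ⟨hne, Or.inr (Or.inl ⟨Or.inl hua, by rw [hua]; exact hA01.symm,
        vne _ _ _ hw0⟩)⟩ hnadj
    · exact ⟨a0, adj0 u (by rw [hu1]; exact hd01.symm) hua,
        adj0 w hw0 (vne _ _ _ hw1)⟩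
  -- case u outside, w.1 = i0
  · by_cases hwa : w = a0
    · exact absurd ⟨hne, Or.inl ⟨Or.inr hwa, vne _ _ _ hu1, by rw [hwa]; exact hA01⟩⟩ hnadj
    · exact ⟨a1, adj1 u hu1 (vne _ _ _ hu0), adj1 w (by rw [hw0]; exact hd01) hwa⟩
  -- case u outside, w.1 = i1
  · by_cases hwa : w = a1
    · exact absurd ⟨hne, Or.inr (Or.inl ⟨Or.inr hwa, vne _ _ _ hu0,
        by rw [hwa]; exact hA01.symm⟩)⟩ hnadj
    · exact ⟨a0, adj0 u hu0 (vne _ _ _ hu1), adj0 w (by rw [hw1]; exact hd01.symm) hwa⟩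
  -- case both outside
  · exact ⟨a0, adj0 u hu0 (vne _ _ _ hu1), adj0 w hw0 (vne _ _ _ hw1)⟩

lemma ncard_split {α : Type*} [Fintype α] {S T : Set α} (h : ∀ x, x ∈ S ↔ x ∉ T) :
    S.ncard + T.ncard = Nat.card α := by
  have hS : S = Tᶜ := by ext x; exact h x
  rw [hS, add_comm, Set.ncard_add_ncard_compl]

lemma ncard_part {k n : ℕ} (p : Fin k) : {v : Fin k × Fin n | v.1 = p}.ncard = n := by
  have h : {v : Fin k × Fin n | v.1 = p} = (fun z : Fin n => (p, z)) '' Set.univ := by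
    ext ⟨a, b⟩
    constructor
    · rintro rfl
      exact ⟨b, trivial, rfl⟩
    · rintro ⟨z, -, h⟩
      cases h; rfl
  rw [h, Set.ncard_image_of_injective _ (fun a b hab => by
    simpa using congrArg Prod.snd hab), Set.ncard_univ, Nat.card_eq_fintype_card,
    Fintype.card_fin]

lemma hubs_perm {k n : ℕ} (i0 i1 i2 : Fin k) (z0 : Fin n) :
    hubs i0 i1 i2 z0 = hubs i1 i0 i2 z0 := by
  ext x; simp only [hubs, Set.mem_insert_iff, Set.mem_singleton_iff]; tauto

lemma hubs_perm' {k n : ℕ} (i0 i1 i2 : Fin k) (z0 : Fin n) :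
    hubs i0 i1 i2 z0 = hubs i2 i0 i1 z0 := by
  ext x; simp only [hubs, Set.mem_insert_iff, Set.mem_singleton_iff]; tauto

lemma Scard {k n : ℕ} (i0 i1 i2 : Fin k) (z0 : Fin n)
    (hd01 : i0 ≠ i1) (hd02 : i0 ≠ i2) (hd12 : i1 ≠ i2) :
    {v : Fin k × Fin n | v.1 ≠ i0 ∧ v ∉ hubs i0 i1 i2 z0}.ncard + (n + 2) = k * n := by
  have h : ∀ x : Fin k × Fin n, x ∈ {v : Fin k × Fin n | v.1 ≠ i0 ∧ v ∉ hubs i0 i1 i2 z0} ↔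
      x ∉ ({v : Fin k × Fin n | v.1 = i0} ∪ {(i1, z0), (i2, z0)}) := by
    intro x
    simp only [Set.mem_setOf_eq, hubs, Set.mem_union, Set.mem_insert_iff,
      Set.mem_singleton_iff]
    constructor
    · rintro ⟨h1, h2⟩ (h | h | h)
      · exact h1 h
      · exact h2 (Or.inr (Or.inl h))
      · exact h2 (Or.inr (Or.inr h))
    · intro h
      push_neg at h
      refine ⟨h.1, ?_⟩
      rintro (rfl | rfl | rfl)
      · exact h.1 rfl
      · exact h.2.1 rfl
      · exact h.2.2 rfl
  have main := ncard_split h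
  have hdisj : Disjoint {v : Fin k × Fin n | v.1 = i0} ({(i1, z0), (i2, z0)} : Set _) := by
    rw [Set.disjoint_left]
    rintro x hx (rfl | rfl) <;> simp only [Set.mem_setOf_eq] at hx
    · exact hd01 hx.symm
    · exact hd02 hx.symm
  rw [Set.ncard_union_eq hdisj, ncard_part, Set.ncard_pair
    (fun h' => hd12 (congrArg Prod.fst h')), Nat.card_eq_fintype_card,
    Fintype.card_prod, Fintype.card_fin, Fintype.card_fin] at main
  exact main

lemma graphB_count {k n : ℕ} (i0 i1 i2 : Fin k) (z0 : Fin n)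
    (hd01 : i0 ≠ i1) (hd02 : i0 ≠ i2) (hd12 : i1 ≠ i2) :
    (graphB k n (hubs i0 i1 i2 z0)).edgeSet.ncard + 3 * (n + 2) ≤ 3 * (k * n) := by
  set H : Set (Fin k × Fin n) := hubs i0 i1 i2 z0 with hH
  set S : Fin k → Set (Fin k × Fin n) := fun i => {v | v.1 ≠ i ∧ v ∉ H} with hS
  set E : Fin k → Set (Sym2 (Fin k × Fin n)) :=
    fun i => (fun v => s((i, z0), v)) '' S i with hE
  have hsub : (graphB k n H).edgeSet ⊆ E i0 ∪ E i1 ∪ E i2 := by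
    intro e he
    induction e using Sym2.ind with
    | _ a b =>
      rw [mem_edgeSet] at he
      obtain ⟨hne, h⟩ := he
      have key : ∀ x y : Fin k × Fin n, x ∈ H → y ∉ H → x.1 ≠ y.1 →
          s(x, y) ∈ E i0 ∪ E i1 ∪ E i2 := by
        intro x y hx hy hxy
        simp only [hH, hubs, Set.mem_insert_iff, Set.mem_singleton_iff] at hx
        rcases hx with rfl | rfl | rfl
        · exact Or.inl (Or.inl ⟨y, ⟨hxy.symm, hy⟩, rfl⟩)
        · exact Or.inl (Or.inr ⟨y, ⟨hxy.symm, hy⟩, rfl⟩)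
        · exact Or.inr ⟨y, ⟨hxy.symm, hy⟩, rfl⟩
      rcases h with ⟨ha, hb⟩ | ⟨hb, ha⟩
      · exact key a b ha hb hne
      · rw [Sym2.eq_swap]
        exact key b a hb ha hne.symm
  have hle : (graphB k n H).edgeSet.ncard ≤ (S i0).ncard + (S i1).ncard + (S i2).ncard := by
    calc (graphB k n H).edgeSet.ncard ≤ (E i0 ∪ E i1 ∪ E i2).ncard :=
          Set.ncard_le_ncard hsub (Set.toFinite _)
      _ ≤ (E i0 ∪ E i1).ncard + (E i2).ncard := Set.ncard_union_le _ _
      _ ≤ (E i0).ncard + (E i1).ncard + (E i2).ncard := by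
          have := Set.ncard_union_le (E i0) (E i1)
          omega
      _ ≤ (S i0).ncard + (S i1).ncard + (S i2).ncard := by
          gcongr <;> exact Set.ncard_image_le (Set.toFinite _)
  have c0 : (S i0).ncard + (n + 2) = k * n := Scard i0 i1 i2 z0 hd01 hd02 hd12
  have c1 : (S i1).ncard + (n + 2) = k * n := by
    have := Scard i1 i0 i2 z0 hd01.symm hd12 hd02
    rwa [← hubs_perm] at this
  have c2 : (S i2).ncard + (n + 2) = k * n := by
    have := Scard i2 i0 i1 z0 hd02.symm hd12.symm hd01
    rwa [← hubs_perm'] at this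
  omega

lemma ncard_prod {α β : Type*} (s : Set α) (t : Set β) :
    (s ×ˢ t).ncard = s.ncard * t.ncard := by
  rw [← Nat.card_coe_set_eq, ← Nat.card_coe_set_eq, ← Nat.card_coe_set_eq,
    Nat.card_congr (Equiv.Set.prod s t), Nat.card_prod]

lemma SAcard {k n : ℕ} (i0 i1 : Fin k) (z0 : Fin n) (hd01 : i0 ≠ i1) :
    {v : Fin k × Fin n | v.1 ≠ i0 ∧ v ≠ (i1, z0)}.ncard + (n + 1) = k * n := by
  have h : ∀ x : Fin k × Fin n, x ∈ {v : Fin k × Fin n | v.1 ≠ i0 ∧ v ≠ (i1, z0)} ↔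
      x ∉ ({v : Fin k × Fin n | v.1 = i0} ∪ {(i1, z0)}) := by
    intro x
    simp only [Set.mem_setOf_eq, Set.mem_union, Set.mem_singleton_iff]
    tauto
  have main := ncard_split h
  have hdisj : Disjoint {v : Fin k × Fin n | v.1 = i0} ({(i1, z0)} : Set _) := by
    rw [Set.disjoint_left]
    rintro x hx rfl
    simp only [Set.mem_setOf_eq] at hx
    exact hd01 hx.symm
  rw [Set.ncard_union_eq hdisj, ncard_part, Set.ncard_singleton, Nat.card_eq_fintype_card,
    Fintype.card_prod, Fintype.card_fin, Fintype.card_fin] at main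
  exact main

lemma PAcard {k n : ℕ} (i0 : Fin k) (z0 : Fin n) :
    {v : Fin k × Fin n | v.1 = i0 ∧ v ≠ (i0, z0)}.ncard + 1 = n := by
  have h : {v : Fin k × Fin n | v.1 = i0} =
      insert (i0, z0) {v : Fin k × Fin n | v.1 = i0 ∧ v ≠ (i0, z0)} := by
    ext v
    simp only [Set.mem_setOf_eq, Set.mem_insert_iff]
    constructor
    · intro hv
      by_cases hv0 : v = (i0, z0)
      · exact Or.inl hv0
      · exact Or.inr ⟨hv, hv0⟩
    · rintro (rfl | ⟨hv, -⟩)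
      · rfl
      · exact hv
  have h2 : ((i0, z0) : Fin k × Fin n) ∉ {v : Fin k × Fin n | v.1 = i0 ∧ v ≠ (i0, z0)} :=
    fun hm => hm.2 rfl
  have := ncard_part (n := n) i0
  rw [h, Set.ncard_insert_of_notMem h2 (Set.toFinite _)] at this
  omega

lemma graphA_count {k n : ℕ} (i0 i1 : Fin k) (z0 : Fin n) (hd01 : i0 ≠ i1) :
    ((graphA k n (i0, z0) (i1, z0)).edgeSet.ncard : ℤ) ≤
      2 * k * n + (n : ℤ) ^ 2 - 4 * n - 1 := by
  set a0 : Fin k × Fin n := (i0, z0) with ha0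
  set a1 : Fin k × Fin n := (i1, z0) with ha1
  set S0 : Set (Fin k × Fin n) := {v | v.1 ≠ i0 ∧ v ≠ a1} with hS0
  set S1 : Set (Fin k × Fin n) := {v | v.1 ≠ i1 ∧ v ≠ a0} with hS1
  set P0 : Set (Fin k × Fin n) := {v | v.1 = i0 ∧ v ≠ a0} with hP0
  set P1 : Set (Fin k × Fin n) := {v | v.1 = i1 ∧ v ≠ a1} with hP1
  set E0 : Set (Sym2 (Fin k × Fin n)) := (fun v => s(a0, v)) '' S0 with hE0
  set E1 : Set (Sym2 (Fin k × Fin n)) := (fun v => s(a1, v)) '' S1 with hE1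
  set Ec : Set (Sym2 (Fin k × Fin n)) :=
    (fun q : (Fin k × Fin n) × (Fin k × Fin n) => s(q.1, q.2)) '' (P0 ×ˢ P1) with hEc
  have hsub : (graphA k n a0 a1).edgeSet ⊆ E0 ∪ E1 ∪ Ec := by
    intro e he
    induction e using Sym2.ind with
    | _ a b =>
      rw [mem_edgeSet] at he
      obtain ⟨hne, h⟩ := he
      rcases h with ⟨h, ha, hb⟩ | ⟨h, ha, hb⟩ | ⟨hpa, hpb, ha, ha', hb, hb'⟩
      · rcases h with rfl | rfl
        · exact Or.inl (Or.inl ⟨b, ⟨hne.symm, hb⟩, rfl⟩)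
        · rw [Sym2.eq_swap]
          exact Or.inl (Or.inl ⟨a, ⟨hne, ha⟩, rfl⟩)
      · rcases h with rfl | rfl
        · exact Or.inl (Or.inr ⟨b, ⟨hne.symm, hb⟩, rfl⟩)
        · rw [Sym2.eq_swap]
          exact Or.inl (Or.inr ⟨a, ⟨hne, ha⟩, rfl⟩)
      · rcases hpa with hpa | hpa
        · have hbp : b.1 = i1 := by
            rcases hpb with h' | h'
            · exact absurd (hpa.trans h'.symm) hne
            · exact h'
          exact Or.inr ⟨(a, b), ⟨⟨hpa, ha⟩, ⟨hbp, hb'⟩⟩, rfl⟩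
        · have hbp : b.1 = i0 := by
            rcases hpb with h' | h'
            · exact h'
            · exact absurd (hpa.trans h'.symm) hne
          rw [Sym2.eq_swap]
          exact Or.inr ⟨(b, a), ⟨⟨hbp, hb⟩, ⟨hpa, ha'⟩⟩, rfl⟩
  have hle : (graphA k n a0 a1).edgeSet.ncard ≤
      S0.ncard + S1.ncard + P0.ncard * P1.ncard := by
    calc (graphA k n a0 a1).edgeSet.ncard ≤ (E0 ∪ E1 ∪ Ec).ncard :=
          Set.ncard_le_ncard hsub (Set.toFinite _)
      _ ≤ (E0 ∪ E1).ncard + Ec.ncard := Set.ncard_union_le _ _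
      _ ≤ E0.ncard + E1.ncard + Ec.ncard := by
          have := Set.ncard_union_le E0 E1
          omega
      _ ≤ S0.ncard + S1.ncard + (P0 ×ˢ P1).ncard := by
          gcongr <;> exact Set.ncard_image_le (Set.toFinite _)
      _ = S0.ncard + S1.ncard + P0.ncard * P1.ncard := by rw [ncard_prod]
  have c0 : S0.ncard + (n + 1) = k * n := SAcard i0 i1 z0 hd01
  have c1 : S1.ncard + (n + 1) = k * n := SAcard i1 i0 z0 hd01.symm
  have p0 : P0.ncard + 1 = n := PAcard i0 z0
  have p1 : P1.ncard + 1 = n := PAcard i1 z0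
  have hle' : ((graphA k n a0 a1).edgeSet.ncard : ℤ) ≤
      (S0.ncard : ℤ) + S1.ncard + (P0.ncard : ℤ) * P1.ncard := by exact_mod_cast hle
  have hq0 : (P0.ncard : ℤ) = (n : ℤ) - 1 := by omega
  have hq1 : (P1.ncard : ℤ) = (n : ℤ) - 1 := by omega
  rw [hq0, hq1] at hle'
  have hc0 : (S0.ncard : ℤ) = (k : ℤ) * n - n - 1 := by omega
  have hc1 : (S1.ncard : ℤ) = (k : ℤ) * n - n - 1 := by omega
  rw [hc0, hc1] at hle'
  nlinarith [hle']

/-- There is a `K_3`-saturated subgraph of `K_k^n` with at most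
`min (2kn + n² − 4n − 1) (3kn − 3n − 6)` edges. -/
theorem stmt_2 (k n : ℕ) (hk : 3 ≤ k) (hn : 2 ≤ n) :
    ∃ J : SimpleGraph (Fin k × Fin n), IsSatIn 3 J (multipartite k n) ∧
      (J.edgeSet.ncard : ℤ) ≤
        min (2 * k * n + (n : ℤ) ^ 2 - 4 * n - 1) (3 * (k:ℤ) * n - 3 * n - 6) := by
  have hk0 : 0 < k := by omega
  have hk1 : 1 < k := by omega
  have hk2 : 2 < k := by omega
  have hn0 : 0 < n := by omega
  have hn1 : 1 < n := by omega
  have d01 : (⟨0, hk0⟩ : Fin k) ≠ ⟨1, hk1⟩ := by simp [Fin.ext_iff]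
  have d02 : (⟨0, hk0⟩ : Fin k) ≠ ⟨2, hk2⟩ := by simp [Fin.ext_iff]
  have d12 : (⟨1, hk1⟩ : Fin k) ≠ ⟨2, hk2⟩ := by simp [Fin.ext_iff]
  have dz : (⟨0, hn0⟩ : Fin n) ≠ ⟨1, hn1⟩ := by simp [Fin.ext_iff]
  by_cases hab : (2 * (k:ℤ) * n + (n:ℤ) ^ 2 - 4 * n - 1) ≤ 3 * (k:ℤ) * n - 3 * n - 6
  · refine ⟨graphA k n (⟨0, hk0⟩, ⟨0, hn0⟩) (⟨1, hk1⟩, ⟨0, hn0⟩),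
      ⟨fun u w h => h.1, graphA_cliqueFree _ _, ?_⟩, ?_⟩
    · intro u w hG hnadj
      obtain ⟨c, h1, h2⟩ := graphA_sat ⟨0, hk0⟩ ⟨1, hk1⟩ ⟨2, hk2⟩ ⟨0, hn0⟩
        d01 d02 d12 u w hG hnadj
      exact not_cf (fun h => hG (congrArg Prod.fst h)) h1 h2
    · rw [le_min_iff]
      refine ⟨graphA_count _ _ _ d01, le_trans (graphA_count _ _ _ d01) hab⟩
  · have hb := graphB_count ⟨0, hk0⟩ ⟨1, hk1⟩ ⟨2, hk2⟩ (⟨0, hn0⟩ : Fin n) d01 d02 d12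
    have hbz : (((graphB k n (hubs ⟨0, hk0⟩ ⟨1, hk1⟩ ⟨2, hk2⟩ ⟨0, hn0⟩)).edgeSet.ncard : ℤ)) ≤
        3 * (k:ℤ) * n - 3 * n - 6 := by
      zify at hb
      linarith
    refine ⟨graphB k n (hubs ⟨0, hk0⟩ ⟨1, hk1⟩ ⟨2, hk2⟩ ⟨0, hn0⟩),
      ⟨fun u w h => h.1, graphB_cliqueFree _, ?_⟩, ?_⟩
    · intro u w hG hnadj
      obtain ⟨c, h1, h2⟩ := graphB_sat ⟨0, hk0⟩ ⟨1, hk1⟩ ⟨2, hk2⟩ ⟨0, hn0⟩ ⟨1, hn1⟩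
        d01 d02 d12 dz u w hG hnadj
      exact not_cf (fun h => hG (congrArg Prod.fst h)) h1 h2
    · rw [le_min_iff]
      exact ⟨le_trans hbz (not_le.mp hab).le, hbz⟩
end

section
/- Let k ≥ 3 and n ≥ 100, and let G be a K_3-saturated subgraph of K_k^n with minimum degree at least 3 and with fewer than 3kn − 3n edges. Then G does not contain four pairwise nonadjacent vertices u_1, u_2, u_3, u_4, each of degree at most 5 in G, whose open neighborhoods in G are pairwise disjoint. -/
open SimpleGraph

lemma common_neighbor {V : Type*} {G : SimpleGraph V} (hcf : G.CliqueFree 3)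
    {u w : V} (hne : u ≠ w)
    (h : ¬ (G ⊔ SimpleGraph.fromEdgeSet {s(u, w)}).CliqueFree 3) :
    ∃ x, G.Adj u x ∧ G.Adj w x := by
  classical
  rw [CliqueFree] at h
  push_neg at h
  obtain ⟨s, hs⟩ := h
  have hadj : ∀ a ∈ s, ∀ b ∈ s, a ≠ b →
      G.Adj a b ∨ (a = u ∧ b = w) ∨ (a = w ∧ b = u) := by
    intro a ha b hb hab
    rcases hs.1 ha hb hab with h1 | h1
    · exact Or.inl h1
    · rw [fromEdgeSet_adj] at h1
      have h2 := h1.1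
      rw [Set.mem_singleton_iff, Sym2.eq_iff] at h2
      tauto
  have hus : u ∈ s ∧ w ∈ s := by
    by_contra hc
    refine hcf s ⟨?_, hs.2⟩
    intro a ha b hb hab
    rcases hadj a ha b hb hab with h1 | ⟨rfl, rfl⟩ | ⟨rfl, rfl⟩
    · exact h1
    · exact absurd ⟨ha, hb⟩ hc
    · exact absurd ⟨hb, ha⟩ hc
  have hsub : ¬ s ⊆ {u, w} := by
    intro hsub
    have h1 := Finset.card_le_card hsub
    have h2 : ({u, w} : Finset V).card ≤ 2 :=
      (Finset.card_insert_le _ _).trans (by simp)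
    have h3 : s.card = 3 := hs.2
    omega
  obtain ⟨x, hxs, hx⟩ := Finset.not_subset.mp hsub
  simp only [Finset.mem_insert, Finset.mem_singleton] at hx
  push_neg at hx
  refine ⟨x, ?_, ?_⟩
  · rcases hadj u hus.1 x hxs (fun h => hx.1 h.symm) with h1 | ⟨_, h1⟩ | ⟨h1, _⟩
    · exact h1
    · exact absurd h1 hx.2
    · exact absurd h1 hne
  · rcases hadj w hus.2 x hxs (fun h => hx.2 h.symm) with h1 | ⟨h1, _⟩ | ⟨_, h1⟩
    · exact h1
    · exact absurd h1.symm hne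
    · exact absurd h1 hx.1

/-- A `K_3`-saturated subgraph of `K_k^n` with minimum degree at least `3` and fewer than
`3kn − 3n` edges contains no four pairwise nonadjacent vertices of degree at most `5`
with pairwise disjoint neighborhoods. -/
theorem stmt_7 (k n : ℕ) (hk : 3 ≤ k) (hn : 100 ≤ n)
    (G : SimpleGraph (Fin k × Fin n))
    (hsat : IsSatIn 3 G (multipartite k n))
    (hdeg : ∀ v, 3 ≤ (G.neighborSet v).ncard)
    (hcard : (G.edgeSet.ncard : ℤ) < 3 * (k : ℤ) * n - 3 * n) :
    ¬ ∃ u : Fin 4 → Fin k × Fin n, Function.Injective u ∧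
        (∀ i j, i ≠ j → ¬ G.Adj (u i) (u j)) ∧
        (∀ i, (G.neighborSet (u i)).ncard ≤ 5) ∧
        (∀ i j, i ≠ j → Disjoint (G.neighborSet (u i)) (G.neighborSet (u j))) := by

  classical
  rintro ⟨u, hinj, hnadj, hdeg5, hdisj⟩
  obtain ⟨hle, hcf, hsatur⟩ := hsat
  have hncard : ∀ v, (G.neighborSet v).ncard = G.degree v := by
    intro v
    rw [Set.ncard_eq_toFinset_card']
    rfl
  -- key inequality for each i
  have key : ∀ i : Fin 4, (k - 1) * n ≤ ∑ w ∈ G.neighborFinset (u i), G.degree w := by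
    intro i
    set ui := u i with hui
    -- common neighbor function
    have hcommon : ∀ v : Fin k × Fin n, ∃ x,
        v.1 ≠ ui.1 → ¬ G.Adj ui v → G.Adj ui x ∧ G.Adj x v := by
      intro v
      by_cases h1 : v.1 ≠ ui.1
      · by_cases h2 : G.Adj ui v
        · exact ⟨v, fun _ h => absurd h2 h⟩
        · have hma : (multipartite k n).Adj ui v := show ui.1 ≠ v.1 from fun h => h1 h.symm
          have hne : ui ≠ v := fun h => h1 (congrArg Prod.fst h).symm
          obtain ⟨x, hx1, hx2⟩ := common_neighbor hcf hne (hsatur ui v hma h2)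
          exact ⟨x, fun _ _ => ⟨hx1, hx2.symm⟩⟩
      · exact ⟨ui, fun h => absurd h h1⟩
    choose xf hxf using hcommon
    set A : Finset (Fin k × Fin n) := Finset.univ.filter (fun v => v.1 ≠ ui.1) with hA
    have hAcard : A.card = (k - 1) * n := by
      have : A = (Finset.univ.filter (· ≠ ui.1)) ×ˢ Finset.univ := by
        ext v
        simp [hA, Finset.mem_product]
      rw [this, Finset.card_product, Finset.filter_ne', Finset.card_erase_of_mem (Finset.mem_univ _)]
      simp
    set T : Finset ((_ : Fin k × Fin n) × (Fin k × Fin n)) :=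
      (G.neighborFinset ui).sigma (fun w => G.neighborFinset w) with hT
    have hTcard : T.card = ∑ w ∈ G.neighborFinset ui, G.degree w := by
      rw [hT, Finset.card_sigma]
      rfl
    have hle2 : A.card ≤ T.card := by
      apply Finset.card_le_card_of_injOn
        (fun v => if G.Adj ui v then (⟨v, ui⟩ : (_ : Fin k × Fin n) × (Fin k × Fin n)) else ⟨xf v, v⟩)
      · intro v hv
        have hv1 : v.1 ≠ ui.1 := by simpa [hA] using hv
        by_cases h2 : G.Adj ui v
        · simp only [if_pos h2]
          rw [hT, Finset.mem_coe, Finset.mem_sigma, mem_neighborFinset, mem_neighborFinset]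
          exact ⟨h2, h2.symm⟩
        · simp only [if_neg h2]
          obtain ⟨hx1, hx2⟩ := hxf v hv1 h2
          rw [hT, Finset.mem_coe, Finset.mem_sigma, mem_neighborFinset, mem_neighborFinset]
          exact ⟨hx1, hx2⟩
      · intro v hv v' hv' heq
        have hv1 : v.1 ≠ ui.1 := by simpa [hA] using hv
        have hv1' : v'.1 ≠ ui.1 := by simpa [hA] using hv'
        by_cases h2 : G.Adj ui v <;> by_cases h2' : G.Adj ui v' <;>
          simp only [if_pos, if_neg, h2, h2', if_true, if_false] at heq
        · exact (Sigma.mk.inj_iff.mp heq).1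
        · exact absurd (congrArg Prod.fst (eq_of_heq (Sigma.mk.inj_iff.mp heq).2).symm) hv1'
        · exact absurd (congrArg Prod.fst (eq_of_heq (Sigma.mk.inj_iff.mp heq).2)) hv1
        · exact eq_of_heq (Sigma.mk.inj_iff.mp heq).2
    omega
  -- the union of the four neighborhoods
  set S : Finset (Fin k × Fin n) :=
    Finset.univ.biUnion (fun i : Fin 4 => G.neighborFinset (u i)) with hS
  have hdisjF : (↑(Finset.univ : Finset (Fin 4)) : Set (Fin 4)).PairwiseDisjoint
      (fun i => G.neighborFinset (u i)) := by
    intro i _ j _ hij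
    have := hdisj i j hij
    simp only [Finset.disjoint_left, mem_neighborFinset]
    intro a ha ha'
    exact Set.disjoint_left.mp this ha ha'
  have hsumS : ∑ w ∈ S, G.degree w = ∑ i : Fin 4, ∑ w ∈ G.neighborFinset (u i), G.degree w :=
    Finset.sum_biUnion hdisjF
  have hsumS_ge : 4 * ((k - 1) * n) ≤ ∑ w ∈ S, G.degree w := by
    rw [hsumS]
    calc 4 * ((k - 1) * n) = ∑ _i : Fin 4, (k - 1) * n := by simp [Finset.sum_const]
    _ ≤ _ := Finset.sum_le_sum (fun i _ => key i)
  have hScard : S.card ≤ 20 := by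
    calc S.card ≤ ∑ i : Fin 4, (G.neighborFinset (u i)).card := Finset.card_biUnion_le
    _ ≤ ∑ _i : Fin 4, 5 := Finset.sum_le_sum (fun i _ => by
        have := hdeg5 i
        rw [hncard] at this
        exact this)
    _ = 20 := by simp
  have hcardV : Fintype.card (Fin k × Fin n) = k * n := by simp
  have hsum_compl : 3 * (k * n - 20) ≤ ∑ w ∈ Sᶜ, G.degree w := by
    calc 3 * (k * n - 20) ≤ 3 * Sᶜ.card := by
          rw [Finset.card_compl, hcardV]
          omega
    _ = ∑ _w ∈ Sᶜ, 3 := by simp [Finset.sum_const, Nat.mul_comm]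
    _ ≤ ∑ w ∈ Sᶜ, G.degree w := Finset.sum_le_sum (fun w _ => by
        have := hdeg w
        rw [hncard] at this
        exact this)
  have htotal : ∑ v, G.degree v = 2 * G.edgeFinset.card := G.sum_degrees_eq_twice_card_edges
  have hsplit : ∑ v ∈ S, G.degree v + ∑ v ∈ Sᶜ, G.degree v = ∑ v, G.degree v :=
    Finset.sum_add_sum_compl S _
  have hEeq : G.edgeSet.ncard = G.edgeFinset.card := by
    rw [← coe_edgeFinset, Set.ncard_coe_finset]
  rw [hEeq] at hcard
  have h1 : 4 * ((k - 1) * n) + 3 * (k * n - 20) ≤ 2 * G.edgeFinset.card := by linarith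
  rw [Nat.sub_mul, one_mul] at h1
  have hE : (G.edgeFinset.card : ℤ) < 3 * (k * n : ℕ) - 3 * (n : ℕ) := by
    push_cast
    linarith
  have hm : 3 * n ≤ k * n := Nat.mul_le_mul_right _ hk
  generalize hgen : k * n = m at h1 hE hm
  omega
end

section
/- For all n ≥ 2, every K_3-saturated subgraph of the complete balanced tripartite graph K_3^n has at least 6n − 6 edges. -/
open SimpleGraph Finset

open scoped Classical

section Abstract

variable {n : ℕ}

private noncomputable def dL (R : Fin n → Fin n → Prop) (i : Fin n) : ℕ :=
  (univ.filter (fun j => R i j)).card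

private noncomputable def dR (R : Fin n → Fin n → Prop) (j : Fin n) : ℕ :=
  (univ.filter (fun i => R i j)).card

private lemma msum_lemma (R : Fin n → Fin n → Prop) :
    ∑ i, dL R i = ∑ j, dR R j := by
  simp only [dL, dR, Finset.card_filter]
  exact Finset.sum_comm

private lemma dL_swap (R : Fin n → Fin n → Prop) (j : Fin n) :
    dL (fun a b => R b a) j = dR R j := rfl

/-- pendant structure lemma (right side pendants) -/
private lemma pendant_struct (hn : 3 ≤ n) (R : Fin n → Fin n → Prop) (bA bC : Fin n → ℕ)
    (covC : ∀ j, n ≤ bC j + ∑ i ∈ univ.filter (fun i => R i j), bA i)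
    (edg : ∀ i j, R i j → bA i + bC j ≤ n)
    (zC : ∀ j, bC j = 0 → ∀ i, R i j)
    (j : Fin n) (hd : dR R j = 1) (hb : 2 * bC j < n) :
    ∃ i₀, (∀ i, R i j ↔ i = i₀) ∧ bA i₀ + bC j = n ∧ 1 ≤ bC j ∧
      ¬ (dL R i₀ = 1 ∧ 2 * bA i₀ < n) := by
  obtain ⟨i₀, hi₀⟩ := Finset.card_eq_one.mp hd
  have hmem : ∀ i, R i j ↔ i = i₀ := by
    intro i
    have h2 : i ∈ univ.filter (fun i => R i j) ↔ i ∈ ({i₀} : Finset (Fin n)) := by rw [hi₀]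
    simpa using h2
  have hb1 : 1 ≤ bC j := by
    rcases Nat.eq_zero_or_pos (bC j) with h0 | h
    · exfalso
      have : dR R j = n := by
        have : univ.filter (fun i => R i j) = univ := by
          apply Finset.filter_true_of_mem
          intro i _; exact zC j h0 i
        simp [dR, this]
      omega
    · exact h
  have hRj : R i₀ j := (hmem i₀).mpr rfl
  have hsum : ∑ i ∈ univ.filter (fun i => R i j), bA i = bA i₀ := by
    rw [hi₀]; simp
  have hcov := covC j
  rw [hsum] at hcov
  have hedge := edg i₀ j hRj
  have heq : bA i₀ + bC j = n := by omega
  exact ⟨i₀, hmem, heq, hb1, by omega⟩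

/-- claim 2: surplus of non-pendant left vertices covers deficits of adjacent right pendants -/
private lemma claim2 (hn : 3 ≤ n) (R : Fin n → Fin n → Prop) (bA bC : Fin n → ℕ)
    (hz : 4 ≤ n ∨ (∀ i, 1 ≤ bA i))
    (covA : ∀ i, n ≤ bA i + ∑ j ∈ univ.filter (fun j => R i j), bC j)
    (covC : ∀ j, n ≤ bC j + ∑ i ∈ univ.filter (fun i => R i j), bA i)
    (edg : ∀ i j, R i j → bA i + bC j ≤ n)
    (zA : ∀ i, bA i = 0 → ∀ j, R i j)
    (zC : ∀ j, bC j = 0 → ∀ i, R i j)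
    (i : Fin n) (hi : ¬ (dL R i = 1 ∧ 2 * bA i < n)) :
    (2*(n:ℤ) - 2) + ∑ j ∈ (univ.filter (fun j => R i j)).filter
        (fun j => dR R j = 1 ∧ 2 * bC j < n), ((n:ℤ) - 2 * bC j)
      ≤ 2 * bA i + ((n:ℤ) - 2) * dL R i := by
  set K := (univ.filter (fun j => R i j)).filter (fun j => dR R j = 1 ∧ 2 * bC j < n) with hK
  rcases Finset.eq_empty_or_nonempty K with hKe | ⟨j₀, hj₀⟩
  · -- no pendant neighbors
    rw [hKe, Finset.sum_empty, add_zero]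
    rcases Nat.eq_zero_or_pos (dL R i) with hd0 | hdpos
    · -- isolated
      have hfil : univ.filter (fun j => R i j) = ∅ := Finset.card_eq_zero.mp hd0
      have := covA i
      rw [hfil, Finset.sum_empty, add_zero] at this
      have : (n:ℤ) ≤ bA i := by exact_mod_cast this
      have h2 : (0:ℤ) ≤ ((n:ℤ) - 2) * dL R i := by
        apply mul_nonneg
        · have : (3:ℤ) ≤ n := by exact_mod_cast hn
          linarith
        · positivity
      linarith
    rcases Nat.eq_zero_or_pos (bA i) with hb0 | hbpos
    · -- zero vertex: full degree
      have hdn : dL R i = n := by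
        have hfil : univ.filter (fun j => R i j) = univ := by
          apply Finset.filter_true_of_mem
          intro j _; exact zA i hb0 j
        simp [dL, hfil]
      have h4 : 4 ≤ n := by
        rcases hz with h4 | hpos
        · exact h4
        · exact absurd (hpos i) (by omega)
      rw [hdn, hb0]
      have hn4 : (4:ℤ) ≤ n := by exact_mod_cast h4
      push_cast
      nlinarith
    -- now dL ≥ 1, bA ≥ 1
    rcases Nat.lt_or_ge (dL R i) 2 with hd1 | hd2
    · -- dL = 1, not pendant: 2 bA i ≥ n
      have hd1' : dL R i = 1 := by omega
      have hbig : n ≤ 2 * bA i := by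
        by_contra hcon
        exact hi ⟨hd1', by omega⟩
      have hbig' : (n:ℤ) ≤ 2 * bA i := by exact_mod_cast hbig
      rw [hd1']
      push_cast
      have : (3:ℤ) ≤ n := by exact_mod_cast hn
      linarith
    · -- dL ≥ 2, bA ≥ 1
      have h1 : (1:ℤ) ≤ bA i := by exact_mod_cast hbpos
      have h2 : (2:ℤ) ≤ dL R i := by exact_mod_cast hd2
      have : (3:ℤ) ≤ n := by exact_mod_cast hn
      nlinarith
  · -- K nonempty
    have hj₀K := hj₀
    rw [hK, Finset.mem_filter, Finset.mem_filter] at hj₀K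
    obtain ⟨⟨_, hRij₀⟩, hd₀, hb₀⟩ := hj₀K
    obtain ⟨i₀, hmem, heq, hb1, hnp⟩ := pendant_struct hn R bA bC covC edg zC j₀ hd₀ hb₀
    have hii : i = i₀ := (hmem i).mp hRij₀
    subst hii
    set β := bC j₀ with hβ
    have hbAi : bA i + β = n := heq
    -- all j in K have bC j = β
    have hval : ∀ j ∈ K, bC j = β := by
      intro j hj
      rw [hK, Finset.mem_filter, Finset.mem_filter] at hj
      obtain ⟨⟨_, hRij⟩, hdj, hbj⟩ := hj
      obtain ⟨i₁, hmem₁, heq₁, _, _⟩ := pendant_struct hn R bA bC covC edg zC j hdj hbj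
      have : i = i₁ := (hmem₁ i).mp hRij
      subst this
      omega
    have hsumK : ∑ j ∈ K, ((n:ℤ) - 2 * bC j) = K.card * ((n:ℤ) - 2 * β) := by
      rw [Finset.sum_congr rfl (fun j hj => by rw [hval j hj])]
      simp [mul_comm]
      ring
    rw [hsumK]
    have hkle : K.card ≤ dL R i := by
      apply Finset.card_le_card
      rw [hK]; exact Finset.filter_subset _ _
    have hk1 : 1 ≤ K.card := Finset.card_pos.mpr ⟨j₀, hj₀⟩
    -- integer arithmetic
    have c1 : (1:ℤ) ≤ K.card := by exact_mod_cast hk1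
    have c2 : (K.card:ℤ) ≤ dL R i := by exact_mod_cast hkle
    have c3 : (1:ℤ) ≤ β := by exact_mod_cast hb1
    have c4 : 2*(β:ℤ) < n := by exact_mod_cast hb₀
    have c5 : (bA i:ℤ) + β = n := by exact_mod_cast hbAi
    have c6 : (3:ℤ) ≤ n := by exact_mod_cast hn
    nlinarith [mul_le_mul_of_nonneg_left c2 (by linarith : (0:ℤ) ≤ (n:ℤ) - 2),
      mul_nonneg (by linarith : (0:ℤ) ≤ (K.card:ℤ) - 1) (by linarith : (0:ℤ) ≤ (β:ℤ) - 1)]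

private lemma transfer (hn : 3 ≤ n) (R : Fin n → Fin n → Prop) (bA bC : Fin n → ℕ)
    (covC : ∀ j, n ≤ bC j + ∑ i ∈ univ.filter (fun i => R i j), bA i)
    (edg : ∀ i j, R i j → bA i + bC j ≤ n)
    (zC : ∀ j, bC j = 0 → ∀ i, R i j) :
    ∑ i ∈ univ.filter (fun i => ¬ (dL R i = 1 ∧ 2 * bA i < n)),
      ∑ j ∈ (univ.filter (fun j => R i j)).filter (fun j => dR R j = 1 ∧ 2 * bC j < n),
        ((n:ℤ) - 2 * bC j)
    = ∑ j ∈ univ.filter (fun j => dR R j = 1 ∧ 2 * bC j < n), ((n:ℤ) - 2 * bC j) := by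
  have hinner : ∀ i, ∑ j ∈ (univ.filter (fun j => R i j)).filter
      (fun j => dR R j = 1 ∧ 2 * bC j < n), ((n:ℤ) - 2 * bC j)
      = ∑ j : Fin n, if (dR R j = 1 ∧ 2 * bC j < n) ∧ R i j then ((n:ℤ) - 2 * bC j) else 0 := by
    intro i
    rw [Finset.filter_filter, ← Finset.sum_filter]
    congr 1
    apply Finset.filter_congr
    intro j _
    tauto
  simp only [hinner]
  rw [Finset.sum_comm]
  rw [show (∑ j ∈ univ.filter (fun j => dR R j = 1 ∧ 2 * bC j < n), ((n:ℤ) - 2 * bC j))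
      = ∑ j : Fin n, if dR R j = 1 ∧ 2 * bC j < n then ((n:ℤ) - 2 * bC j) else 0
      from Finset.sum_filter _ _]
  apply Finset.sum_congr rfl
  intro j _
  by_cases hpj : dR R j = 1 ∧ 2 * bC j < n
  swap
  · simp only [hpj, if_false]
    apply Finset.sum_eq_zero
    intro i _
    have : ¬ ((dR R j = 1 ∧ 2 * bC j < n) ∧ R i j) := fun h => hpj h.1
    simp [this]
  rw [if_pos hpj]
  obtain ⟨hdj, hbj⟩ := hpj
  obtain ⟨i₀, hmem, heq, hb1, hnp⟩ := pendant_struct hn R bA bC covC edg zC j hdj hbj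
  have hcond : ∀ i, ((dR R j = 1 ∧ 2 * bC j < n) ∧ R i j) ↔ i = i₀ := by
    intro i
    constructor
    · rintro ⟨-, h⟩; exact (hmem i).mp h
    · rintro rfl; exact ⟨⟨hdj, hbj⟩, (hmem _).mpr rfl⟩
  calc ∑ i ∈ univ.filter (fun i => ¬ (dL R i = 1 ∧ 2 * bA i < n)),
        (if (dR R j = 1 ∧ 2 * bC j < n) ∧ R i j then ((n:ℤ) - 2 * bC j) else 0)
      = ∑ i ∈ univ.filter (fun i => ¬ (dL R i = 1 ∧ 2 * bA i < n)),
        (if i = i₀ then ((n:ℤ) - 2 * bC j) else 0) := by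
        apply Finset.sum_congr rfl
        intro i _
        simp only [hcond i]
    _ = ((n:ℤ) - 2 * bC j) := by
        rw [Finset.sum_ite_eq']
        simp [hnp]

private lemma side_bound (hn : 3 ≤ n) (R : Fin n → Fin n → Prop) (bA bC : Fin n → ℕ)
    (hz : 4 ≤ n ∨ (∀ i, 1 ≤ bA i))
    (covA : ∀ i, n ≤ bA i + ∑ j ∈ univ.filter (fun j => R i j), bC j)
    (covC : ∀ j, n ≤ bC j + ∑ i ∈ univ.filter (fun i => R i j), bA i)
    (edg : ∀ i j, R i j → bA i + bC j ≤ n)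
    (zA : ∀ i, bA i = 0 → ∀ j, R i j)
    (zC : ∀ j, bC j = 0 → ∀ i, R i j) :
    (2*(n:ℤ) - 2) * (univ.filter (fun i => ¬ (dL R i = 1 ∧ 2 * bA i < n))).card
        + ∑ j ∈ univ.filter (fun j => dR R j = 1 ∧ 2 * bC j < n), ((n:ℤ) - 2 * bC j)
      ≤ ∑ i ∈ univ.filter (fun i => ¬ (dL R i = 1 ∧ 2 * bA i < n)),
        (2 * (bA i:ℤ) + ((n:ℤ) - 2) * dL R i) := by
  have h1 : ∀ i ∈ univ.filter (fun i => ¬ (dL R i = 1 ∧ 2 * bA i < n)),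
      (2*(n:ℤ) - 2) + ∑ j ∈ (univ.filter (fun j => R i j)).filter
        (fun j => dR R j = 1 ∧ 2 * bC j < n), ((n:ℤ) - 2 * bC j)
      ≤ 2 * (bA i:ℤ) + ((n:ℤ) - 2) * dL R i := by
    intro i hi
    rw [Finset.mem_filter] at hi
    exact claim2 hn R bA bC hz covA covC edg zA zC i hi.2
  have h2 := Finset.sum_le_sum h1
  rw [Finset.sum_add_distrib, Finset.sum_const,
    transfer hn R bA bC covC edg zC, nsmul_eq_mul, mul_comm] at h2
  exact h2

/-- main abstract counting lemma -/
private lemma pair_core (hn : 3 ≤ n) (R : Fin n → Fin n → Prop) (bA bC : Fin n → ℕ)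
    (hz : 4 ≤ n ∨ ((∀ i, 1 ≤ bA i) ∧ (∀ j, 1 ≤ bC j)))
    (covA : ∀ i, n ≤ bA i + ∑ j ∈ univ.filter (fun j => R i j), bC j)
    (covC : ∀ j, n ≤ bC j + ∑ i ∈ univ.filter (fun i => R i j), bA i)
    (edg : ∀ i j, R i j → bA i + bC j ≤ n)
    (zA : ∀ i, bA i = 0 → ∀ j, R i j)
    (zC : ∀ j, bC j = 0 → ∀ i, R i j) :
    2*n*(n-1) ≤ (∑ i, bA i) + (∑ j, bC j) + (n-2) * ∑ i, dL R i := by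
  have hA := side_bound hn R bA bC (hz.imp id And.left) covA covC edg zA zC
  have edg' : ∀ i j, (fun a b => R b a) i j → bC i + bA j ≤ n := fun i j h => by
    rw [add_comm]; exact edg j i h
  have hC := side_bound hn (fun a b => R b a) bC bA (hz.imp id And.right)
    covC covA edg' zC zA
  -- pendant side sums
  have pendA : ∀ i ∈ univ.filter (fun i => dL R i = 1 ∧ 2 * bA i < n),
      (2 * (bA i:ℤ) + ((n:ℤ) - 2) * dL R i) + ((n:ℤ) - 2 * bA i) = 2*(n:ℤ) - 2 := by
    intro i hi
    rw [Finset.mem_filter] at hi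
    rw [hi.2.1]
    push_cast
    ring
  have pendC : ∀ j ∈ univ.filter (fun j => dR R j = 1 ∧ 2 * bC j < n),
      (2 * (bC j:ℤ) + ((n:ℤ) - 2) * dR R j) + ((n:ℤ) - 2 * bC j) = 2*(n:ℤ) - 2 := by
    intro j hj
    rw [Finset.mem_filter] at hj
    rw [hj.2.1]
    push_cast
    ring
  -- split total sums
  have splitA : ∑ i ∈ univ.filter (fun i => dL R i = 1 ∧ 2 * bA i < n),
        (2 * (bA i:ℤ) + ((n:ℤ) - 2) * dL R i)
      + ∑ i ∈ univ.filter (fun i => ¬ (dL R i = 1 ∧ 2 * bA i < n)),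
        (2 * (bA i:ℤ) + ((n:ℤ) - 2) * dL R i)
      = ∑ i : Fin n, (2 * (bA i:ℤ) + ((n:ℤ) - 2) * dL R i) :=
    Finset.sum_filter_add_sum_filter_not univ _ _
  have splitC : ∑ j ∈ univ.filter (fun j => dR R j = 1 ∧ 2 * bC j < n),
        (2 * (bC j:ℤ) + ((n:ℤ) - 2) * dR R j)
      + ∑ j ∈ univ.filter (fun j => ¬ (dR R j = 1 ∧ 2 * bC j < n)),
        (2 * (bC j:ℤ) + ((n:ℤ) - 2) * dR R j)
      = ∑ j : Fin n, (2 * (bC j:ℤ) + ((n:ℤ) - 2) * dR R j) :=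
    Finset.sum_filter_add_sum_filter_not univ _ _
  have cardA : (univ.filter (fun i => dL R i = 1 ∧ 2 * bA i < n)).card
      + (univ.filter (fun i => ¬ (dL R i = 1 ∧ 2 * bA i < n))).card = n := by
    rw [Finset.card_filter_add_card_filter_not]
    simp
  have cardC : (univ.filter (fun j => dR R j = 1 ∧ 2 * bC j < n)).card
      + (univ.filter (fun j => ¬ (dR R j = 1 ∧ 2 * bC j < n))).card = n := by
    rw [Finset.card_filter_add_card_filter_not]
    simp
  -- pendant sums rearranged
  have sapA : ∑ i ∈ univ.filter (fun i => dL R i = 1 ∧ 2 * bA i < n),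
        (2 * (bA i:ℤ) + ((n:ℤ) - 2) * dL R i)
      + ∑ i ∈ univ.filter (fun i => dL R i = 1 ∧ 2 * bA i < n), ((n:ℤ) - 2 * bA i)
      = (2*(n:ℤ) - 2) * (univ.filter (fun i => dL R i = 1 ∧ 2 * bA i < n)).card := by
    rw [← Finset.sum_add_distrib, Finset.sum_congr rfl pendA, Finset.sum_const,
      nsmul_eq_mul, mul_comm]
  have sapC : ∑ j ∈ univ.filter (fun j => dR R j = 1 ∧ 2 * bC j < n),
        (2 * (bC j:ℤ) + ((n:ℤ) - 2) * dR R j)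
      + ∑ j ∈ univ.filter (fun j => dR R j = 1 ∧ 2 * bC j < n), ((n:ℤ) - 2 * bC j)
      = (2*(n:ℤ) - 2) * (univ.filter (fun j => dR R j = 1 ∧ 2 * bC j < n)).card := by
    rw [← Finset.sum_add_distrib, Finset.sum_congr rfl pendC, Finset.sum_const,
      nsmul_eq_mul, mul_comm]
  -- identify flipped degree functions in hC
  have hC' : (2*(n:ℤ) - 2) * (univ.filter (fun j => ¬ (dR R j = 1 ∧ 2 * bC j < n))).card
        + ∑ i ∈ univ.filter (fun i => dL R i = 1 ∧ 2 * bA i < n), ((n:ℤ) - 2 * bA i)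
      ≤ ∑ j ∈ univ.filter (fun j => ¬ (dR R j = 1 ∧ 2 * bC j < n)),
        (2 * (bC j:ℤ) + ((n:ℤ) - 2) * dR R j) := hC
  -- totals
  have totA : ∑ i : Fin n, (2 * (bA i:ℤ) + ((n:ℤ) - 2) * dL R i)
      = 2 * (∑ i, (bA i:ℤ)) + ((n:ℤ) - 2) * ∑ i, (dL R i : ℤ) := by
    rw [Finset.sum_add_distrib, ← Finset.mul_sum, ← Finset.mul_sum]
  have totC : ∑ j : Fin n, (2 * (bC j:ℤ) + ((n:ℤ) - 2) * dR R j)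
      = 2 * (∑ j, (bC j:ℤ)) + ((n:ℤ) - 2) * ∑ i, (dL R i : ℤ) := by
    rw [Finset.sum_add_distrib, ← Finset.mul_sum, ← Finset.mul_sum]
    congr 2
    have := msum_lemma R
    have : (∑ j, (dR R j : ℤ)) = ∑ i, (dL R i : ℤ) := by
      exact_mod_cast congrArg (Nat.cast : ℕ → ℤ) this.symm
    rw [this]
  -- put everything together in ℤ
  have main : 4*(n:ℤ)*(n:ℤ) - 4*(n:ℤ) ≤
      2 * (∑ i, (bA i:ℤ)) + 2 * (∑ j, (bC j:ℤ)) + 2 * (((n:ℤ) - 2) * ∑ i, (dL R i : ℤ)) := by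
    have cA : ((univ.filter (fun i => dL R i = 1 ∧ 2 * bA i < n)).card : ℤ)
        + ((univ.filter (fun i => ¬ (dL R i = 1 ∧ 2 * bA i < n))).card : ℤ) = n := by
      exact_mod_cast cardA
    have cC : ((univ.filter (fun j => dR R j = 1 ∧ 2 * bC j < n)).card : ℤ)
        + ((univ.filter (fun j => ¬ (dR R j = 1 ∧ 2 * bC j < n))).card : ℤ) = n := by
      exact_mod_cast cardC
    have e1 := splitA
    have e2 := splitC
    rw [totA] at e1
    rw [totC] at e2
    nlinarith [hA, hC', sapA, sapC]
  -- cast to ℕ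
  have hsum : (0:ℤ) ≤ ∑ i, (dL R i : ℤ) := by positivity
  have h1 : 1 ≤ n := by omega
  have h2 : 2 ≤ n := by omega
  zify [h1, h2]
  linarith [main]

private lemma fin3_cover (a b c x : Fin 3) (hab : a ≠ b) (hac : a ≠ c) (hbc : b ≠ c) :
    x = a ∨ x = b ∨ x = c := by
  revert hab hac hbc
  revert a b c x
  decide

/-- the n = 3 case in presence of a zero value on the right side -/
private lemma pair3 (R : Fin 3 → Fin 3 → Prop) (bA bC : Fin 3 → ℕ)
    (covA : ∀ i, 3 ≤ bA i + ∑ j ∈ univ.filter (fun j => R i j), bC j)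
    (covC : ∀ j, 3 ≤ bC j + ∑ i ∈ univ.filter (fun i => R i j), bA i)
    (edg : ∀ i j, R i j → bA i + bC j ≤ 3)
    (zA : ∀ i, bA i = 0 → ∀ j, R i j)
    (zC : ∀ j, bC j = 0 → ∀ i, R i j)
    (j₀ : Fin 3) (h0 : bC j₀ = 0) :
    12 ≤ (∑ i, bA i) + ((∑ j, bC j) + ∑ i, dL R i) := by
  have hn3 : 3 ≤ 3 := le_refl 3
  have mflip : ∑ i, dL R i = ∑ j, dR R j := msum_lemma R
  rw [mflip, ← Finset.sum_add_distrib]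
  -- t ≥ 3
  have t3 : 3 ≤ ∑ i, bA i := by
    have h := covC j₀
    rw [h0, zero_add] at h
    calc (3:ℕ) ≤ ∑ i ∈ univ.filter (fun i => R i j₀), bA i := h
      _ ≤ ∑ i, bA i := Finset.sum_le_sum_of_subset (Finset.filter_subset _ _)
  -- zero implies full degree
  have hB0 : ∀ j, bC j = 0 → dR R j = 3 := by
    intro j hj
    have hfil : univ.filter (fun i => R i j) = univ := by
      apply Finset.filter_true_of_mem
      intro i _; exact zC j hj i
    simp [dR, hfil]
  -- per-vertex bound
  have perv : ∀ j, 3 ≤ bC j + dR R j ∨ (dR R j = 1 ∧ bC j = 1) := by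
    intro j
    rcases Nat.eq_zero_or_pos (bC j) with hj0 | hjpos
    · left; rw [hB0 j hj0]; omega
    rcases Nat.eq_zero_or_pos (dR R j) with hd0 | hdpos
    · left
      have hfil : univ.filter (fun i => R i j) = ∅ := Finset.card_eq_zero.mp hd0
      have h := covC j
      rw [hfil, Finset.sum_empty, add_zero] at h
      omega
    rcases Nat.lt_or_ge (dR R j) 2 with hd1 | hd2
    · have hd : dR R j = 1 := by omega
      rcases Nat.lt_or_ge (bC j) 2 with hb1 | hb2
      · right; exact ⟨hd, by omega⟩
      · left; omega
    · left; omega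
  -- pendant set
  set P := univ.filter (fun j => dR R j = 1 ∧ bC j = 1) with hP
  have cardP : P.card + (univ.filter (fun j => ¬ (dR R j = 1 ∧ bC j = 1))).card = 3 := by
    rw [hP, Finset.card_filter_add_card_filter_not]
    simp
  have sum_lb : 9 ≤ P.card + ∑ j, (bC j + dR R j) := by
    have hsplit : ∑ j ∈ P, (bC j + dR R j)
        + ∑ j ∈ univ.filter (fun j => ¬ (dR R j = 1 ∧ bC j = 1)), (bC j + dR R j)
        = ∑ j, (bC j + dR R j) := Finset.sum_filter_add_sum_filter_not univ _ _
    have hPl : 2 * P.card ≤ ∑ j ∈ P, (bC j + dR R j) := by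
      rw [mul_comm, ← smul_eq_mul]
      apply Finset.card_nsmul_le_sum
      intro j hj
      rw [hP, Finset.mem_filter] at hj
      omega
    have hNl : 3 * (univ.filter (fun j => ¬ (dR R j = 1 ∧ bC j = 1))).card
        ≤ ∑ j ∈ univ.filter (fun j => ¬ (dR R j = 1 ∧ bC j = 1)), (bC j + dR R j) := by
      rw [mul_comm, ← smul_eq_mul]
      apply Finset.card_nsmul_le_sum
      intro j hj
      rw [Finset.mem_filter] at hj
      rcases perv j with h | h
      · exact h
      · exact absurd h hj.2
    omega
  -- case on pendant count
  rcases Nat.eq_zero_or_pos P.card with hp0 | hppos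
  · omega
  -- p ≥ 1 : get a pendant
  obtain ⟨j₁, hj₁⟩ := Finset.card_pos.mp hppos
  have hj₁' := hj₁
  rw [hP, Finset.mem_filter] at hj₁'
  obtain ⟨-, hdj₁, hbj₁⟩ := hj₁'
  -- nu function for pendants
  have nu : ∀ j ∈ P, ∃ i₀, (∀ i, R i j ↔ i = i₀) ∧ bA i₀ = 2 := by
    intro j hj
    rw [hP, Finset.mem_filter] at hj
    obtain ⟨-, hdj, hbj⟩ := hj
    obtain ⟨i₀, hmem, heq, -, -⟩ := pendant_struct hn3 R bA bC covC edg zC j hdj (by omega)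
    exact ⟨i₀, hmem, by omega⟩
  obtain ⟨ν₁, hν₁mem, hν₁b⟩ := nu j₁ hj₁
  -- all bA positive
  have hA1 : ∀ i, 1 ≤ bA i := by
    intro i
    by_contra hcon
    have hi0 : bA i = 0 := by omega
    have : R i j₁ := zA i hi0 j₁
    have : i = ν₁ := (hν₁mem i).mp this
    rw [this, hν₁b] at hi0
    exact absurd hi0 (by norm_num)
  -- j₀ not a pendant
  have hj₀P : j₀ ∉ P := by
    rw [hP, Finset.mem_filter]
    rintro ⟨-, -, h⟩
    rw [h0] at h
    exact absurd h (by norm_num)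
  have hcardle : P.card ≤ 2 := by
    by_contra hcon
    have h3 : P.card = 3 := by
      have := Finset.card_le_univ P
      simp at this
      omega
    have : P = univ := Finset.eq_univ_of_card P (by simpa using h3)
    exact hj₀P (this ▸ Finset.mem_univ j₀)
  rcases Nat.lt_or_ge P.card 2 with hp1 | hp2
  · -- p = 1 : t ≥ 4
    have t4 : 4 ≤ ∑ i, bA i := by
      have hsplit : bA ν₁ + ∑ i ∈ univ.erase ν₁, bA i = ∑ i, bA i :=
        Finset.add_sum_erase univ bA (Finset.mem_univ ν₁)
      have hcard : (univ.erase ν₁).card = 2 := by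
        rw [Finset.card_erase_of_mem (Finset.mem_univ ν₁)]
        simp
      have h2 : 2 ≤ ∑ i ∈ univ.erase ν₁, bA i := by
        calc (2:ℕ) = (univ.erase ν₁).card * 1 := by rw [hcard]
          _ ≤ ∑ i ∈ univ.erase ν₁, bA i := by
            rw [← smul_eq_mul]
            exact Finset.card_nsmul_le_sum _ _ _ (fun i _ => hA1 i)
      omega
    have hp : P.card = 1 := by omega
    omega
  · -- p = 2 : t ≥ 5
    have hp : P.card = 2 := by omega
    obtain ⟨ja, jb, hab, hPab⟩ := Finset.card_eq_two.mp hp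
    -- both are pendants
    have hja : ja ∈ P := by rw [hPab]; simp
    have hjb : jb ∈ P := by rw [hPab]; simp
    obtain ⟨νa, hνamem, hνab⟩ := nu ja hja
    obtain ⟨νb, hνbmem, hνbb⟩ := nu jb hjb
    have hj₀a : j₀ ≠ ja := by
      intro h; rw [← h] at hja; exact hj₀P hja
    have hj₀b : j₀ ≠ jb := by
      intro h; rw [← h] at hjb; exact hj₀P hjb
    -- key : vertices other than νa νb have bA ≥ 3
    have key : ∀ u, u ≠ νa → u ≠ νb → 3 ≤ bA u := by
      intro u hua hub
      have h := covA u
      have hzero : ∑ j ∈ univ.filter (fun j => R u j), bC j = 0 := by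
        apply Finset.sum_eq_zero
        intro j hj
        rw [Finset.mem_filter] at hj
        have hRuj := hj.2
        rcases fin3_cover j₀ ja jb j hj₀a hj₀b hab with h1 | h1 | h1
        · rw [h1]; exact h0
        · exfalso; rw [h1] at hRuj; exact hua ((hνamem u).mp hRuj)
        · exfalso; rw [h1] at hRuj; exact hub ((hνbmem u).mp hRuj)
      rw [hzero, add_zero] at h
      exact h
    have t5 : 5 ≤ ∑ i, bA i := by
      rcases eq_or_ne νa νb with hee | hne
      · -- same nu : two others have bA ≥ 3
        have hsplit : bA νa + ∑ i ∈ univ.erase νa, bA i = ∑ i, bA i :=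
          Finset.add_sum_erase univ bA (Finset.mem_univ νa)
        have hcard : (univ.erase νa).card = 2 := by
          rw [Finset.card_erase_of_mem (Finset.mem_univ νa)]
          simp
        have h6 : 6 ≤ ∑ i ∈ univ.erase νa, bA i := by
          calc (6:ℕ) = (univ.erase νa).card * 3 := by rw [hcard]
            _ ≤ ∑ i ∈ univ.erase νa, bA i := by
              rw [← smul_eq_mul]
              apply Finset.card_nsmul_le_sum
              intro i hi
              rw [Finset.mem_erase] at hi
              exact key i hi.1 (hee ▸ hi.1)
        omega
      · -- distinct nus
        have hsplit : bA νa + ∑ i ∈ univ.erase νa, bA i = ∑ i, bA i :=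
          Finset.add_sum_erase univ bA (Finset.mem_univ νa)
        have hmemb : νb ∈ univ.erase νa := by
          rw [Finset.mem_erase]
          exact ⟨hne.symm, Finset.mem_univ νb⟩
        have hsplit2 : bA νb + ∑ i ∈ (univ.erase νa).erase νb, bA i
            = ∑ i ∈ univ.erase νa, bA i := Finset.add_sum_erase _ bA hmemb
        have h1 : 1 ≤ ∑ i ∈ (univ.erase νa).erase νb, bA i := by
          have hcard : ((univ.erase νa).erase νb).card = 1 := by
            rw [Finset.card_erase_of_mem hmemb,
              Finset.card_erase_of_mem (Finset.mem_univ νa)]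
            simp
          calc (1:ℕ) = ((univ.erase νa).erase νb).card * 1 := by simp [hcard]
            _ ≤ _ := by
              rw [← smul_eq_mul]
              exact Finset.card_nsmul_le_sum _ _ _ (fun i _ => hA1 i)
        omega
    omega

private lemma pair_all (hn : 3 ≤ n) (R : Fin n → Fin n → Prop) (bA bC : Fin n → ℕ)
    (covA : ∀ i, n ≤ bA i + ∑ j ∈ univ.filter (fun j => R i j), bC j)
    (covC : ∀ j, n ≤ bC j + ∑ i ∈ univ.filter (fun i => R i j), bA i)
    (edg : ∀ i j, R i j → bA i + bC j ≤ n)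
    (zA : ∀ i, bA i = 0 → ∀ j, R i j)
    (zC : ∀ j, bC j = 0 → ∀ i, R i j) :
    2*n*(n-1) ≤ (∑ i, bA i) + (∑ j, bC j) + (n-2) * ∑ i, dL R i := by
  rcases Nat.lt_or_ge n 4 with h4 | h4
  · -- n = 3 case
    have hn3 : n = 3 := by omega
    subst hn3
    by_cases hzc : ∃ j, bC j = 0
    · obtain ⟨j₀, hj₀⟩ := hzc
      have h := pair3 R bA bC covA covC edg zA zC j₀ hj₀
      norm_num
      omega
    · by_cases hza : ∃ i, bA i = 0
      · obtain ⟨i₀, hi₀⟩ := hza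
        have edg' : ∀ i j, (fun a b => R b a) i j → bC i + bA j ≤ 3 := fun i j h => by
          rw [add_comm]; exact edg j i h
        have h := pair3 (fun a b => R b a) bC bA covC covA edg' zC zA i₀ hi₀
        have hm : ∑ j, dL (fun a b => R b a) j = ∑ i, dL R i := by
          have h1 : ∑ j, dL (fun a b => R b a) j = ∑ j, dR R j := rfl
          rw [h1, ← msum_lemma R]
        rw [hm] at h
        norm_num
        omega
      · push_neg at hza hzc
        apply pair_core (by norm_num) R bA bC _ covA covC edg zA zC
        right
        exact ⟨fun i => Nat.pos_of_ne_zero (hza i), fun j => Nat.pos_of_ne_zero (hzc j)⟩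
  · exact pair_core (by omega) R bA bC (Or.inl h4) covA covC edg zA zC

end Abstract

section Graph

variable {n : ℕ} (G : SimpleGraph (Fin 3 × Fin n))

private noncomputable def bdeg (j : Fin 3) (u : Fin 3 × Fin n) : ℕ :=
  (univ.filter (fun x : Fin n => G.Adj u (j, x))).card

private lemma fin3_enum : ∀ i : Fin 3, i = 0 ∨ i = 1 ∨ i = 2 := by decide

private lemma pin (x i j k : Fin 3) (hij : i ≠ j) (hik : i ≠ k) (hjk : j ≠ k)
    (h1 : x ≠ i) (h2 : x ≠ k) : x = j := by
  revert hij hik hjk h1 h2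
  revert x i j k
  decide

private lemma common_nbr (hsub : G ≤ multipartite 3 n) (hfree : G.CliqueFree 3)
    (hsat : ∀ u w, (multipartite 3 n).Adj u w → ¬ G.Adj u w →
      ¬ (G ⊔ SimpleGraph.fromEdgeSet {s(u, w)}).CliqueFree 3)
    {u w : Fin 3 × Fin n} (hM : u.1 ≠ w.1) (hnadj : ¬ G.Adj u w) :
    ∃ v, G.Adj u v ∧ G.Adj w v := by
  have hM' : (multipartite 3 n).Adj u w := hM
  have h := hsat u w hM' hnadj
  rw [SimpleGraph.CliqueFree] at h
  push_neg at h
  obtain ⟨t, ht⟩ := h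
  have hclique := ht.1
  have hcard := ht.2
  have hne : u ≠ w := fun h => hM (by rw [h])
  have hin : u ∈ t ∧ w ∈ t := by
    by_contra hcon
    apply hfree t
    refine ⟨fun a ha b hb hab => ?_, hcard⟩
    have h2 := hclique ha hb hab
    rw [SimpleGraph.sup_adj, SimpleGraph.fromEdgeSet_adj, Set.mem_singleton_iff,
      Sym2.eq_iff] at h2
    rcases h2 with h2 | ⟨h2 | h2, -⟩
    · exact h2
    · exact absurd ⟨h2.1 ▸ (Finset.mem_coe.mp ha), h2.2 ▸ (Finset.mem_coe.mp hb)⟩ hcon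
    · exact absurd ⟨h2.2 ▸ (Finset.mem_coe.mp hb), h2.1 ▸ (Finset.mem_coe.mp ha)⟩ hcon
  obtain ⟨hu, hw⟩ := hin
  have hpair : ({u, w} : Finset (Fin 3 × Fin n)) ⊆ t := by
    intro x hx
    rcases Finset.mem_insert.mp hx with h | h
    · exact h ▸ hu
    · exact (Finset.mem_singleton.mp h) ▸ hw
  have hnonempty : (t \ ({u, w} : Finset (Fin 3 × Fin n))).Nonempty := by
    rw [← Finset.card_pos, Finset.card_sdiff_of_subset hpair, Finset.card_pair hne, hcard]
    omega
  obtain ⟨v, hv⟩ := hnonempty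
  rw [Finset.mem_sdiff, Finset.mem_insert, Finset.mem_singleton] at hv
  push_neg at hv
  obtain ⟨hvt, hvu, hvw⟩ := hv
  have hadj : ∀ z ∈ t, z ≠ v → G.Adj z v := by
    intro z hz hzv
    have h2 := hclique (Finset.mem_coe.mpr hz) (Finset.mem_coe.mpr hvt) hzv
    rw [SimpleGraph.sup_adj, SimpleGraph.fromEdgeSet_adj, Set.mem_singleton_iff,
      Sym2.eq_iff] at h2
    rcases h2 with h2 | ⟨h2 | h2, -⟩
    · exact h2
    · exact absurd h2.2 hvw
    · exact absurd h2.2 hvu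
  exact ⟨v, hadj u hu (Ne.symm hvu), hadj w hw (Ne.symm hvw)⟩

private lemma cover_lemma (hsub : G ≤ multipartite 3 n) (hfree : G.CliqueFree 3)
    (hsat : ∀ u w, (multipartite 3 n).Adj u w → ¬ G.Adj u w →
      ¬ (G ⊔ SimpleGraph.fromEdgeSet {s(u, w)}).CliqueFree 3)
    (i j k : Fin 3) (hij : i ≠ j) (hik : i ≠ k) (hjk : j ≠ k) (a : Fin n) :
    n ≤ bdeg G j (i,a) + ∑ c ∈ univ.filter (fun c => G.Adj (i,a) (k,c)), bdeg G j (k,c) := by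
  have hsubset : (univ : Finset (Fin n)) ⊆
      (univ.filter (fun x => G.Adj (i,a) (j,x))) ∪
      (univ.filter (fun c => G.Adj (i,a) (k,c))).biUnion
        (fun c => univ.filter (fun x => G.Adj (k,c) (j,x))) := by
    intro x _
    by_cases hadj : G.Adj (i,a) (j,x)
    · exact Finset.mem_union_left _ (by simp [hadj])
    · have hM : ((i,a) : Fin 3 × Fin n).1 ≠ ((j,x) : Fin 3 × Fin n).1 := hij
      obtain ⟨v, hv1, hv2⟩ := common_nbr G hsub hfree hsat hM hadj
      obtain ⟨v1, v2⟩ := v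
      have hvi : v1 ≠ i := by
        have := hsub hv1
        exact fun h => this (by rw [h])
      have hvj : v1 ≠ j := by
        have := hsub hv2
        exact fun h => this (by rw [h])
      have hvk : v1 = k := pin v1 i k j hik hij (Ne.symm hjk) hvi hvj
      subst hvk
      apply Finset.mem_union_right
      apply Finset.mem_biUnion.mpr
      exact ⟨v2, by simp [hv1], by simp [hv2.symm]⟩
  calc n = (univ : Finset (Fin n)).card := by simp
    _ ≤ ((univ.filter (fun x => G.Adj (i,a) (j,x))) ∪
      (univ.filter (fun c => G.Adj (i,a) (k,c))).biUnion
        (fun c => univ.filter (fun x => G.Adj (k,c) (j,x)))).card :=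
      Finset.card_le_card hsubset
    _ ≤ (univ.filter (fun x => G.Adj (i,a) (j,x))).card +
      ((univ.filter (fun c => G.Adj (i,a) (k,c))).biUnion
        (fun c => univ.filter (fun x => G.Adj (k,c) (j,x)))).card := Finset.card_union_le _ _
    _ ≤ bdeg G j (i,a) + ∑ c ∈ univ.filter (fun c => G.Adj (i,a) (k,c)), bdeg G j (k,c) := by
      apply Nat.add_le_add_left
      exact Finset.card_biUnion_le

private lemma edge_lemma (hsub : G ≤ multipartite 3 n) (hfree : G.CliqueFree 3)
    (i j k : Fin 3) (hij : i ≠ j) (hik : i ≠ k) (hjk : j ≠ k) (a : Fin n) (c : Fin n)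
    (hadj : G.Adj (i,a) (k,c)) :
    bdeg G j (i,a) + bdeg G j (k,c) ≤ n := by
  have hdisj : Disjoint (univ.filter (fun x => G.Adj (i,a) (j,x)))
      (univ.filter (fun x => G.Adj (k,c) (j,x))) := by
    rw [Finset.disjoint_left]
    intro x hx1 hx2
    rw [Finset.mem_filter] at hx1 hx2
    apply hfree {(i,a),(k,c),(j,x)}
    rw [SimpleGraph.is3Clique_triple_iff]
    exact ⟨hadj, hx1.2, hx2.2⟩
  calc bdeg G j (i,a) + bdeg G j (k,c)
      = ((univ.filter (fun x => G.Adj (i,a) (j,x))) ∪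
        (univ.filter (fun x => G.Adj (k,c) (j,x)))).card :=
      (Finset.card_union_of_disjoint hdisj).symm
    _ ≤ (univ : Finset (Fin n)).card := Finset.card_le_card (Finset.subset_univ _)
    _ = n := by simp

private lemma zero_lemma (hsub : G ≤ multipartite 3 n) (hfree : G.CliqueFree 3)
    (hsat : ∀ u w, (multipartite 3 n).Adj u w → ¬ G.Adj u w →
      ¬ (G ⊔ SimpleGraph.fromEdgeSet {s(u, w)}).CliqueFree 3)
    (i j k : Fin 3) (hij : i ≠ j) (hik : i ≠ k) (hjk : j ≠ k) (a : Fin n)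
    (h0 : bdeg G j (i,a) = 0) (c : Fin n) : G.Adj (i,a) (k,c) := by
  by_contra hnadj
  have hM : ((i,a) : Fin 3 × Fin n).1 ≠ ((k,c) : Fin 3 × Fin n).1 := hik
  obtain ⟨v, hv1, hv2⟩ := common_nbr G hsub hfree hsat hM hnadj
  obtain ⟨v1, v2⟩ := v
  have hvi : v1 ≠ i := by
    have := hsub hv1
    exact fun h => this (by rw [h])
  have hvk : v1 ≠ k := by
    have := hsub hv2
    exact fun h => this (by rw [h])
  have hvj : v1 = j := pin v1 i j k hij hik hjk hvi hvk
  have hmem : v2 ∈ univ.filter (fun x : Fin n => G.Adj (i,a) (j,x)) := by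
    rw [← hvj]
    simp [hv1]
  rw [Finset.card_eq_zero.mp h0] at hmem
  simp at hmem

private lemma bdeg_self (hsub : G ≤ multipartite 3 n) (i : Fin 3) (a : Fin n) :
    bdeg G i (i,a) = 0 := by
  rw [bdeg, Finset.card_eq_zero, Finset.filter_eq_empty_iff]
  intro x _ hadj
  exact (hsub hadj) rfl

private lemma degree_eq (u : Fin 3 × Fin n) :
    G.degree u = ∑ j, bdeg G j u := by
  have h1 : G.degree u = (univ.filter (G.Adj u)).card := by
    rw [← SimpleGraph.neighborFinset_eq_filter]
    rfl
  rw [h1, Finset.card_filter, Fintype.sum_prod_type]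
  apply Finset.sum_congr rfl
  intro j _
  rw [bdeg, Finset.card_filter]

private lemma E_symm (i j : Fin 3) :
    ∑ a, bdeg G j (i,a) = ∑ a, bdeg G i (j,a) := by
  simp only [bdeg, Finset.card_filter]
  rw [Finset.sum_comm]
  apply Finset.sum_congr rfl
  intro x _
  apply Finset.sum_congr rfl
  intro a _
  exact if_congr (SimpleGraph.adj_comm _ _ _) rfl rfl

private lemma inst_lemma (hsub : G ≤ multipartite 3 n) (hfree : G.CliqueFree 3)
    (hsat : ∀ u w, (multipartite 3 n).Adj u w → ¬ G.Adj u w →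
      ¬ (G ⊔ SimpleGraph.fromEdgeSet {s(u, w)}).CliqueFree 3)
    (hn3 : 3 ≤ n) (i j k : Fin 3) (hij : i ≠ j) (hik : i ≠ k) (hjk : j ≠ k) :
    2*n*(n-1) ≤ (∑ a, bdeg G j (i,a)) + (∑ c, bdeg G j (k,c))
      + (n-2) * ∑ a, bdeg G k (i,a) := by
  have covA : ∀ a, n ≤ bdeg G j (i,a)
      + ∑ c ∈ univ.filter (fun c => G.Adj (i,a) (k,c)), bdeg G j (k,c) :=
    fun a => cover_lemma G hsub hfree hsat i j k hij hik hjk a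
  have covC : ∀ c, n ≤ bdeg G j (k,c)
      + ∑ a ∈ univ.filter (fun a => G.Adj (i,a) (k,c)), bdeg G j (i,a) := by
    intro c
    have h := cover_lemma G hsub hfree hsat k j i (Ne.symm hjk) (Ne.symm hik) (Ne.symm hij) c
    have hfil : univ.filter (fun a => G.Adj (k,c) (i,a))
        = univ.filter (fun a => G.Adj (i,a) (k,c)) :=
      Finset.filter_congr (fun a _ => by rw [SimpleGraph.adj_comm])
    rw [hfil] at h
    exact h
  have edg : ∀ a c, G.Adj (i,a) (k,c) → bdeg G j (i,a) + bdeg G j (k,c) ≤ n :=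
    fun a c h => edge_lemma G hsub hfree i j k hij hik hjk a c h
  have zA : ∀ a, bdeg G j (i,a) = 0 → ∀ c, G.Adj (i,a) (k,c) :=
    fun a h0 c => zero_lemma G hsub hfree hsat i j k hij hik hjk a h0 c
  have zC : ∀ c, bdeg G j (k,c) = 0 → ∀ a, G.Adj (i,a) (k,c) :=
    fun c h0 a =>
      (zero_lemma G hsub hfree hsat k j i (Ne.symm hjk) (Ne.symm hik) (Ne.symm hij) c h0 a).symm
  have h := pair_all hn3 (fun a c => G.Adj (i,a) (k,c))
    (fun a => bdeg G j (i,a)) (fun c => bdeg G j (k,c)) covA covC edg zA zC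
  have hdl : ∑ a, dL (fun a c => G.Adj (i,a) (k,c)) a = ∑ a, bdeg G k (i,a) := rfl
  rw [hdl] at h
  exact h

private lemma two_le_aux (hsub : G ≤ multipartite 3 n) (hfree : G.CliqueFree 3)
    (hsat : ∀ u w, (multipartite 3 n).Adj u w → ¬ G.Adj u w →
      ¬ (G ⊔ SimpleGraph.fromEdgeSet {s(u, w)}).CliqueFree 3)
    (hn : 2 ≤ n) (i j k : Fin 3) (hij : i ≠ j) (hik : i ≠ k) (hjk : j ≠ k) (a : Fin n) :
    2 ≤ bdeg G j (i,a) + bdeg G k (i,a) := by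
  rcases Nat.eq_zero_or_pos (bdeg G j (i,a)) with h0 | h1
  · have hall := zero_lemma G hsub hfree hsat i j k hij hik hjk a h0
    have : bdeg G k (i,a) = n := by
      rw [bdeg, Finset.filter_true_of_mem (fun c _ => hall c)]
      simp
    omega
  rcases Nat.eq_zero_or_pos (bdeg G k (i,a)) with h0' | h1'
  · have hall := zero_lemma G hsub hfree hsat i k j hik hij (Ne.symm hjk) a h0'
    have : bdeg G j (i,a) = n := by
      rw [bdeg, Finset.filter_true_of_mem (fun c _ => hall c)]
      simp
    omega
  omega

private lemma edge_count (hsub : G ≤ multipartite 3 n) :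
    2 * G.edgeFinset.card
      = 2 * ((∑ a, bdeg G 1 ((0:Fin 3),a)) + (∑ a, bdeg G 2 ((0:Fin 3),a))
        + (∑ a, bdeg G 2 ((1:Fin 3),a))) := by
  rw [← SimpleGraph.sum_degrees_eq_twice_card_edges, Fintype.sum_prod_type]
  have h1 : ∀ i : Fin 3, ∑ a, G.degree (i, a) = ∑ j : Fin 3, ∑ a, bdeg G j (i,a) := by
    intro i
    rw [Finset.sum_comm]
    exact Finset.sum_congr rfl (fun a _ => degree_eq G (i,a))
  rw [Fin.sum_univ_three]
  rw [h1 0, h1 1, h1 2]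
  simp only [Fin.sum_univ_three]
  have z0 : ∑ a, bdeg G 0 ((0:Fin 3),a) = 0 :=
    Finset.sum_eq_zero (fun a _ => bdeg_self G hsub 0 a)
  have z1 : ∑ a, bdeg G 1 ((1:Fin 3),a) = 0 :=
    Finset.sum_eq_zero (fun a _ => bdeg_self G hsub 1 a)
  have z2 : ∑ a, bdeg G 2 ((2:Fin 3),a) = 0 :=
    Finset.sum_eq_zero (fun a _ => bdeg_self G hsub 2 a)
  have s10 : ∑ a, bdeg G 0 ((1:Fin 3),a) = ∑ a, bdeg G 1 ((0:Fin 3),a) := E_symm G 1 0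
  have s20 : ∑ a, bdeg G 0 ((2:Fin 3),a) = ∑ a, bdeg G 2 ((0:Fin 3),a) := E_symm G 2 0
  have s21 : ∑ a, bdeg G 1 ((2:Fin 3),a) = ∑ a, bdeg G 2 ((1:Fin 3),a) := E_symm G 2 1
  rw [z0, z1, z2, s10, s20, s21]
  ring

end Graph

/-- Every `K_3`-saturated subgraph of `K_3^n` has at least `6n − 6` edges. -/
theorem stmt_9 (n : ℕ) (hn : 2 ≤ n)
    (G : SimpleGraph (Fin 3 × Fin n))
    (hsat : IsSatIn 3 G (multipartite 3 n)) :
    6 * (n : ℤ) - 6 ≤ (G.edgeSet.ncard : ℤ) := by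
  classical
  obtain ⟨hsub, hfree, hsatc⟩ := hsat
  have key : 6 * (n-1) ≤ G.edgeFinset.card := by
    have hec := edge_count G hsub
    rcases Nat.lt_or_ge n 3 with h2 | h3
    · -- n = 2 : minimum degree argument
      have hn2 : n = 2 := by omega
      have hdeg : ∀ u : Fin 3 × Fin n, 2 ≤ G.degree u := by
        rintro ⟨i, a⟩
        rw [degree_eq G (i,a), Fin.sum_univ_three]
        have hi3 : i = 0 ∨ i = 1 ∨ i = 2 := fin3_enum i
        rcases hi3 with rfl | rfl | rfl
        · have := two_le_aux G hsub hfree hsatc hn 0 1 2 (by decide) (by decide) (by decide) a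
          have hz := bdeg_self G hsub 0 a
          omega
        · have := two_le_aux G hsub hfree hsatc hn 1 0 2 (by decide) (by decide) (by decide) a
          have hz := bdeg_self G hsub 1 a
          omega
        · have := two_le_aux G hsub hfree hsatc hn 2 0 1 (by decide) (by decide) (by decide) a
          have hz := bdeg_self G hsub 2 a
          omega
      have hsum := (SimpleGraph.sum_degrees_eq_twice_card_edges G).symm
      have hlb : 2 * Fintype.card (Fin 3 × Fin n) ≤ ∑ v, G.degree v := by
        calc 2 * Fintype.card (Fin 3 × Fin n)
            = (univ : Finset (Fin 3 × Fin n)).card * 2 := by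
              rw [Finset.card_univ]; ring
          _ ≤ ∑ v, G.degree v := by
              rw [← smul_eq_mul]
              exact Finset.card_nsmul_le_sum _ _ _ (fun v _ => hdeg v)
      have hcV : Fintype.card (Fin 3 × Fin n) = 3 * n := by simp
      rw [hcV] at hlb
      subst hn2
      omega
    · -- n ≥ 3 : main counting
      obtain ⟨m, rfl⟩ : ∃ m, n = m + 2 := ⟨n - 2, by omega⟩
      have I1 := inst_lemma G hsub hfree hsatc h3 0 1 2 (by decide) (by decide) (by decide)
      have I2 := inst_lemma G hsub hfree hsatc h3 0 2 1 (by decide) (by decide) (by decide)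
      have I3 := inst_lemma G hsub hfree hsatc h3 1 0 2 (by decide) (by decide) (by decide)
      have s21 : ∑ a, bdeg G 1 ((2:Fin 3),a) = ∑ a, bdeg G 2 ((1:Fin 3),a) := E_symm G 2 1
      have s10 : ∑ a, bdeg G 0 ((1:Fin 3),a) = ∑ a, bdeg G 1 ((0:Fin 3),a) := E_symm G 1 0
      have s20 : ∑ a, bdeg G 0 ((2:Fin 3),a) = ∑ a, bdeg G 2 ((0:Fin 3),a) := E_symm G 2 0
      rw [s21] at I1
      rw [s10, s20] at I3
      set e1 := ∑ a, bdeg G 1 ((0:Fin 3), a) with he1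
      set e2 := ∑ a, bdeg G 2 ((0:Fin 3), a) with he2
      set e3 := ∑ a, bdeg G 2 ((1:Fin 3), a) with he3
      have hme : m + 2 - 1 = m + 1 := by omega
      have hms : m + 2 - 2 = m := by omega
      rw [hme, hms] at I1 I2 I3
      rw [hme]
      have hcard : G.edgeFinset.card = e1 + e2 + e3 := by omega
      rw [hcard]
      have htot : 3 * (2*(m+2)*(m+1)) ≤ (m+2) * (e1 + e2 + e3) := by nlinarith
      have := Nat.le_of_mul_le_mul_left (by nlinarith : (m+2) * (6*(m+1)) ≤ (m+2) * (e1+e2+e3)) (by omega : 0 < m+2)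
      omega
  have hcard : (G.edgeSet.ncard : ℤ) = (G.edgeFinset.card : ℤ) := by
    rw [← SimpleGraph.coe_edgeFinset, Set.ncard_coe_finset]
  rw [hcard]
  have h1 : 1 ≤ n := by omega
  have : ((6 * (n-1) : ℕ) : ℤ) ≤ (G.edgeFinset.card : ℤ) := by exact_mod_cast key
  have hcast : ((6 * (n-1) : ℕ) : ℤ) = 6 * (n:ℤ) - 6 := by
    push_cast [Nat.cast_sub h1]
    ring
  linarith [hcast ▸ this]
end

section
/- Let k ≥ 3 and n ≥ 2, and let G be a K_3-saturated subgraph of K_k^n. Then every vertex of G has degree at least 2. -/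
open SimpleGraph

lemma tri_aux {V : Type*} (J : SimpleGraph V) (hJ : J.CliqueFree 3) (v w : V)
    (h : ¬ (J ⊔ SimpleGraph.fromEdgeSet {s(v, w)}).CliqueFree 3) :
    ∃ x, J.Adj v x ∧ J.Adj w x := by
  classical
  rw [CliqueFree] at h
  push_neg at h
  obtain ⟨s, hs⟩ := h
  have hadj : ∀ a b, a ∈ s → b ∈ s → a ≠ b →
      J.Adj a b ∨ (s(a, b) : Sym2 V) = s(v, w) := by
    intro a b ha hb hab
    have := hs.1 ha hb hab
    rcases this with h1 | h2
    · exact Or.inl h1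
    · exact Or.inr h2.1
  have hvs : v ∈ s := by
    by_contra hv
    refine hJ s ⟨?_, hs.2⟩
    intro a ha b hb hab
    rcases hadj a b ha hb hab with h1 | h2
    · exact h1
    · rw [Sym2.eq_iff] at h2
      rcases h2 with ⟨rfl, rfl⟩ | ⟨rfl, rfl⟩
      · exact absurd ha hv
      · exact absurd hb hv
  have hws : w ∈ s := by
    by_contra hw
    refine hJ s ⟨?_, hs.2⟩
    intro a ha b hb hab
    rcases hadj a b ha hb hab with h1 | h2
    · exact h1
    · rw [Sym2.eq_iff] at h2
      rcases h2 with ⟨rfl, rfl⟩ | ⟨rfl, rfl⟩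
      · exact absurd hb hw
      · exact absurd ha hw
  have hvw : v ≠ w := by
    rintro rfl
    refine hJ s ⟨?_, hs.2⟩
    intro a ha b hb hab
    rcases hadj a b ha hb hab with h1 | h2
    · exact h1
    · rw [Sym2.eq_iff] at h2
      rcases h2 with ⟨rfl, rfl⟩ | ⟨rfl, rfl⟩ <;> exact absurd rfl hab
  have hcard : ((s.erase v).erase w).Nonempty := by
    have : 1 ≤ ((s.erase v).erase w).card := by
      have h1 : (s.erase v).card = 2 := by
        rw [Finset.card_erase_of_mem hvs, hs.2]
      have h2 : ((s.erase v).erase w).card = 1 := by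
        rw [Finset.card_erase_of_mem (Finset.mem_erase.mpr ⟨hvw.symm, hws⟩), h1]
      omega
    exact Finset.card_pos.mp this
  obtain ⟨x, hx⟩ := hcard
  rw [Finset.mem_erase, Finset.mem_erase] at hx
  obtain ⟨hxw, hxv, hxs⟩ := hx
  refine ⟨x, ?_, ?_⟩
  · rcases hadj v x hvs hxs (Ne.symm hxv) with h1 | h2
    · exact h1
    · rw [Sym2.eq_iff] at h2
      rcases h2 with ⟨h3, h4⟩ | ⟨h3, h4⟩
      · exact absurd h4 hxw
      · exact absurd h4 hxv
  · rcases hadj w x hws hxs (Ne.symm hxw) with h1 | h2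
    · exact h1
    · rw [Sym2.eq_iff] at h2
      rcases h2 with ⟨h3, h4⟩ | ⟨h3, h4⟩
      · exact absurd h3 hvw.symm
      · exact absurd h4 hxv

/-- Every vertex of a `K_3`-saturated subgraph of `K_k^n` has degree at least `2`. -/
theorem stmt_10 (k n : ℕ) (hk : 3 ≤ k) (hn : 2 ≤ n)
    (G : SimpleGraph (Fin k × Fin n))
    (hsat : IsSatIn 3 G (multipartite k n)) :
    ∀ v, 2 ≤ (G.neighborSet v).ncard := by
  obtain ⟨hle, hcf, hadd⟩ := hsat
  intro v
  -- find a first neighbor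
  have hknt : Nontrivial (Fin k) := Fin.nontrivial_iff_two_le.mpr (by omega)
  obtain ⟨i, hi⟩ := exists_ne v.1
  have hn0 : 0 < n := by omega
  have hu : ∃ u, G.Adj v u := by
    set w0 : Fin k × Fin n := (i, ⟨0, hn0⟩) with hw0
    have hmw0 : (multipartite k n).Adj v w0 := by
      simp only [multipartite, hw0]
      exact hi.symm
    by_cases hG : G.Adj v w0
    · exact ⟨w0, hG⟩
    · obtain ⟨x, hx1, _⟩ := tri_aux G hcf v w0 (hadd v w0 hmw0 hG)
      exact ⟨x, hx1⟩
  obtain ⟨u, hu⟩ := hu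
  have huv : u.1 ≠ v.1 := Ne.symm (hle hu)
  -- second coordinate flip
  have hnnt : Nontrivial (Fin n) := Fin.nontrivial_iff_two_le.mpr hn
  obtain ⟨j, hj⟩ := exists_ne u.2
  set w : Fin k × Fin n := (u.1, j) with hw
  have hwu : w ≠ u := by
    intro h
    exact hj (congrArg Prod.snd h)
  have hmw : (multipartite k n).Adj v w := by
    simp only [multipartite, hw]
    exact fun h => huv h.symm
  have two_nbrs : ∀ a b, G.Adj v a → G.Adj v b → a ≠ b → 2 ≤ (G.neighborSet v).ncard := by
    intro a b ha hb hab
    exact (Set.one_lt_ncard_iff (Set.toFinite (G.neighborSet v))).mpr ⟨a, b, ha, hb, hab⟩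
  by_cases hGw : G.Adj v w
  · refine two_nbrs u w hu hGw ?_
    intro h
    exact hj (congrArg Prod.snd h).symm
  · obtain ⟨x, hx1, hx2⟩ := tri_aux G hcf v w (hadd v w hmw hGw)
    by_cases hxu : x = u
    · subst hxu
      exact ((hle hx2 : w.1 ≠ x.1) rfl).elim
    · exact two_nbrs u x hu hx1 (Ne.symm hxu)
end

section
/- Let t ≥ 4, k ≥ 2t − 4 and n ≥ 2. Let G_{k,n,t} be the subgraph of K_k^n whose edges are: all pairs {v_r^1, v_s^1} with 1 ≤ r < s ≤ 2t−4 except the matching pairs {v_1^1 v_2^1, v_3^1 v_4^1, ..., v_{2t−5}^1 v_{2t−4}^1}; all pairs {v_r^i, v_{r+1}^j} with i ≥ 2, j ≥ 2 and r ∈ {1, 3, ..., 2t−5}; all pairs {v_r^i, v_s^1} with i ≥ 2, r ≤ 2t−4, s ≤ 2t−4 and r ≠ s; and all pairs {v_r^i, v_s^1} with 1 ≤ i ≤ n, r > 2t−4 and s ≤ 2t−4. Then G_{k,n,t} is a K_t-saturated subgraph of K_k^n and its number of edges equals (t−2)n^2 + (2t−4)kn − 2(2t−4)n − C(2t−4,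 2), where C(2t−4, 2) denotes the binomial coefficient (2t−4 choose 2). -/
open SimpleGraph

def GRel (t : ℕ) {k n : ℕ} (u w : Fin k × Fin n) : Prop :=
      ((u.1 : ℕ) < 2 * t - 4 ∧ (w.1 : ℕ) < 2 * t - 4 ∧ u.1 ≠ w.1 ∧
        (u.2 : ℕ) = 0 ∧ (w.2 : ℕ) = 0 ∧ (u.1 : ℕ) / 2 ≠ (w.1 : ℕ) / 2) ∨
      ((u.1 : ℕ) < 2 * t - 4 ∧ (w.1 : ℕ) < 2 * t - 4 ∧ u.1 ≠ w.1 ∧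
        (u.1 : ℕ) / 2 = (w.1 : ℕ) / 2 ∧ (u.2 : ℕ) ≠ 0 ∧ (w.2 : ℕ) ≠ 0) ∨
      ((u.1 : ℕ) < 2 * t - 4 ∧ (w.1 : ℕ) < 2 * t - 4 ∧ u.1 ≠ w.1 ∧
        (u.2 : ℕ) ≠ 0 ∧ (w.2 : ℕ) = 0) ∨
      (2 * t - 4 ≤ (u.1 : ℕ) ∧ (w.1 : ℕ) < 2 * t - 4 ∧ (w.2 : ℕ) = 0)

lemma rel_ne {t k n : ℕ} {u w : Fin k × Fin n} (h : GRel t u w) : (u.1 : ℕ) ≠ (w.1 : ℕ) := by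
  rcases h with ⟨_,_,h,_⟩|⟨_,_,h,_⟩|⟨_,_,h,_⟩|⟨h1,h2,_⟩
  · exact fun e => h (Fin.val_inj.mp e)
  · exact fun e => h (Fin.val_inj.mp e)
  · exact fun e => h (Fin.val_inj.mp e)
  · omega

lemma adj_iff {t k n : ℕ} {u w : Fin k × Fin n} :
    (fromRel (GRel t)).Adj u w ↔ GRel t u w ∨ GRel t w u := by
  rw [fromRel_adj]
  constructor
  · exact fun h => h.2
  · rintro h
    refine ⟨?_, h⟩
    rcases h with h | h
    · exact fun e => rel_ne h (by rw [e])
    · exact fun e => rel_ne h (by rw [e])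

lemma adj_ne {t k n : ℕ} {u w : Fin k × Fin n} (h : (fromRel (GRel t)).Adj u w) :
    (u.1 : ℕ) ≠ (w.1 : ℕ) := by
  rcases adj_iff.mp h with h | h
  · exact rel_ne h
  · exact (rel_ne h).symm

lemma rel_zz {t k n : ℕ} {u w : Fin k × Fin n} (h1 : (u.1:ℕ) < 2*t-4) (h2 : (w.1:ℕ) < 2*t-4)
    (h3 : (u.2:ℕ) = 0) (h4 : (w.2:ℕ) = 0) (h5 : (u.1:ℕ)/2 ≠ (w.1:ℕ)/2) : GRel t u w :=
  Or.inl ⟨h1, h2, fun e => h5 (by rw [e]), h3, h4, h5⟩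

lemma rel_nn {t k n : ℕ} {u w : Fin k × Fin n} (h1 : (u.1:ℕ) < 2*t-4) (h2 : (w.1:ℕ) < 2*t-4)
    (h0 : (u.1:ℕ) ≠ (w.1:ℕ)) (h5 : (u.1:ℕ)/2 = (w.1:ℕ)/2)
    (h3 : (u.2:ℕ) ≠ 0) (h4 : (w.2:ℕ) ≠ 0) : GRel t u w :=
  Or.inr (Or.inl ⟨h1, h2, fun e => h0 (by rw [e]), h5, h3, h4⟩)

lemma rel_nz {t k n : ℕ} {u w : Fin k × Fin n} (h1 : (u.1:ℕ) < 2*t-4) (h2 : (w.1:ℕ) < 2*t-4)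
    (h0 : (u.1:ℕ) ≠ (w.1:ℕ)) (h3 : (u.2:ℕ) ≠ 0) (h4 : (w.2:ℕ) = 0) : GRel t u w :=
  Or.inr (Or.inr (Or.inl ⟨h1, h2, fun e => h0 (by rw [e]), h3, h4⟩))

lemma rel_hz {t k n : ℕ} {u w : Fin k × Fin n} (h1 : 2*t-4 ≤ (u.1:ℕ)) (h2 : (w.1:ℕ) < 2*t-4)
    (h4 : (w.2:ℕ) = 0) : GRel t u w :=
  Or.inr (Or.inr (Or.inr ⟨h1, h2, h4⟩))

lemma key {t k n : ℕ} (ht : 4 ≤ t) {s : Finset (Fin k × Fin n)}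
    (hs : (fromRel (GRel t (k:=k) (n:=n))).IsNClique t s) {u v : Fin k × Fin n}
    (hu : u ∈ s) (hv : v ∈ s) (huv : u ≠ v)
    (h1 : (u.1:ℕ) < 2*t-4) (h2 : (v.1:ℕ) < 2*t-4)
    (hp : (u.1:ℕ)/2 = (v.1:ℕ)/2) (hnz : (u.2:ℕ) ≠ 0) : False := by
  have hadj : ∀ x ∈ s, ∀ y ∈ s, x ≠ y → (fromRel (GRel t)).Adj x y := fun x hx y hy hxy =>
    hs.1 hx hy hxy
  have huv1 : (u.1:ℕ) ≠ (v.1:ℕ) := adj_ne (hadj u hu v hv huv)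
  have claim : ∀ x ∈ s, x ≠ u → x ≠ v →
      (x.1:ℕ) < 2*t-4 ∧ (x.2:ℕ) = 0 ∧ (x.1:ℕ)/2 ≠ (u.1:ℕ)/2 := by
    intro x hx hxu hxv
    have hxu1 : (x.1:ℕ) ≠ (u.1:ℕ) := adj_ne (hadj x hx u hu hxu)
    have hxv1 : (x.1:ℕ) ≠ (v.1:ℕ) := adj_ne (hadj x hx v hv hxv)
    rcases adj_iff.mp (hadj x hx u hu hxu) with
      (⟨a1,a2,_,a4,a5,a6⟩|⟨a1,a2,_,a4,a5,a6⟩|⟨a1,a2,_,a4,a5⟩|⟨a1,a2,a3⟩) |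
      (⟨a1,a2,_,a4,a5,a6⟩|⟨a1,a2,_,a4,a5,a6⟩|⟨a1,a2,_,a4,a5⟩|⟨a1,a2,a3⟩)
    · exact absurd a5 hnz
    · omega
    · exact absurd a5 hnz
    · omega
    · exact absurd a4 hnz
    · omega
    · exact ⟨a2, a5, by omega⟩
    · omega
  -- now all other clique vertices are zeros with pairwise distinct pairs ≠ u's pair
  have hcard : ((s.erase u).erase v).card = t - 2 := by
    rw [Finset.card_erase_of_mem (Finset.mem_erase.mpr ⟨Ne.symm huv, hv⟩),
      Finset.card_erase_of_mem hu, hs.2]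
    omega
  have hmaps : ∀ x ∈ (s.erase u).erase v, (x.1:ℕ)/2 ∈ (Finset.range (t-2)).erase ((u.1:ℕ)/2) := by
    intro x hx
    have hx' := Finset.mem_of_mem_erase (Finset.mem_of_mem_erase hx)
    have hxv : x ≠ v := (Finset.mem_erase.mp hx).1
    have hxu : x ≠ u := (Finset.mem_erase.mp (Finset.mem_of_mem_erase hx)).1
    obtain ⟨c1, c2, c3⟩ := claim x hx' hxu hxv
    exact Finset.mem_erase.mpr ⟨c3, Finset.mem_range.mpr (by omega)⟩
  have hinj : Set.InjOn (fun x : Fin k × Fin n => (x.1:ℕ)/2) ((s.erase u).erase v) := by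
    intro x hx y hy hxy
    by_contra hne
    have hxy2 : (x.1:ℕ)/2 = (y.1:ℕ)/2 := hxy
    have hx' := Finset.mem_of_mem_erase (Finset.mem_of_mem_erase hx)
    have hy' := Finset.mem_of_mem_erase (Finset.mem_of_mem_erase hy)
    obtain ⟨c1, c2, _⟩ := claim x hx' (Finset.mem_erase.mp (Finset.mem_of_mem_erase hx)).1
      (Finset.mem_erase.mp hx).1
    obtain ⟨d1, d2, _⟩ := claim y hy' (Finset.mem_erase.mp (Finset.mem_of_mem_erase hy)).1
      (Finset.mem_erase.mp hy).1
    rcases adj_iff.mp (hadj x hx' y hy' hne) with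
      (⟨_,_,_,_,_,a6⟩|⟨_,_,_,_,a5,_⟩|⟨_,_,_,a4,_⟩|⟨a1,_,_⟩) |
      (⟨_,_,_,_,_,a6⟩|⟨_,_,_,_,a5,_⟩|⟨_,_,_,a4,_⟩|⟨a1,_,_⟩)
    · exact a6 hxy2
    · exact a5 c2
    · exact a4 c2
    · omega
    · exact a6 hxy2.symm
    · exact a5 d2
    · exact a4 d2
    · omega
  have := Finset.card_le_card_of_injOn _ hmaps hinj
  rw [hcard, Finset.card_erase_of_mem (Finset.mem_range.mpr (by omega)),
    Finset.card_range] at this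
  omega

lemma cliqueFree_G (t k n : ℕ) (ht : 4 ≤ t) :
    (fromRel (GRel t (k:=k) (n:=n))).CliqueFree t := by
  intro s hs
  have hmaps : ∀ x ∈ s, (if (x.1:ℕ) < 2*t-4 then (x.1:ℕ)/2 else t-2) ∈ Finset.range (t-1) := by
    intro x _
    split <;> exact Finset.mem_range.mpr (by omega)
  have hlt : (Finset.range (t-1)).card < s.card := by
    rw [Finset.card_range, hs.2]; omega
  obtain ⟨u, hu, v, hv, huv, hfe⟩ := Finset.exists_ne_map_eq_of_card_lt_of_maps_to hlt hmaps
  have hadj := hs.1 hu hv huv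
  by_cases h1 : (u.1:ℕ) < 2*t-4 <;> by_cases h2 : (v.1:ℕ) < 2*t-4 <;>
    simp only [h1, h2, if_pos, if_neg, if_true, if_false] at hfe
  · -- both low, same pair
    have hp : (u.1:ℕ)/2 = (v.1:ℕ)/2 := hfe
    rcases adj_iff.mp hadj with
      (⟨_,_,_,_,_,a6⟩|⟨_,_,_,_,a5,a6⟩|⟨_,_,_,a4,_⟩|⟨a1,_,_⟩) |
      (⟨_,_,_,_,_,a6⟩|⟨_,_,_,_,a5,a6⟩|⟨_,_,_,a4,_⟩|⟨a1,_,_⟩)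
    · exact a6 hp
    · exact key ht hs hu hv huv h1 h2 hp a5
    · exact key ht hs hu hv huv h1 h2 hp a4
    · omega
    · exact a6 hp.symm
    · exact key ht hs hv hu huv.symm h2 h1 hp.symm a5
    · exact key ht hs hv hu huv.symm h2 h1 hp.symm a4
    · omega
  · omega
  · omega
  · -- both high: no adjacency possible
    rcases adj_iff.mp hadj with
      (⟨a1,_,_⟩|⟨a1,_,_⟩|⟨a1,_,_⟩|⟨_,a2,_⟩) | (⟨a1,_,_⟩|⟨a1,_,_⟩|⟨a1,_,_⟩|⟨_,a2,_⟩) <;> omega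

lemma not_cliqueFree_of {V : Type*} [DecidableEq V] [Fintype V] (J : SimpleGraph V) (t : ℕ)
    (ht : 2 ≤ t) (u w : V) (g : Fin (t-2) → V) (hg : Function.Injective g)
    (huw : J.Adj u w) (hu : ∀ j, J.Adj u (g j)) (hw : ∀ j, J.Adj w (g j))
    (hgg : ∀ i j, i ≠ j → J.Adj (g i) (g j)) : ¬ J.CliqueFree t := by
  intro h
  apply h (insert u (insert w (Finset.univ.image g)))
  have hunw : u ∉ insert w (Finset.univ.image g) := by
    simp only [Finset.mem_insert, Finset.mem_image, Finset.mem_univ, true_and]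
    rintro (rfl | ⟨j, rfl⟩)
    · exact J.irrefl huw
    · exact J.irrefl (hu j)
  have hwng : w ∉ Finset.univ.image g := by
    simp only [Finset.mem_image, Finset.mem_univ, true_and]
    rintro ⟨j, rfl⟩
    exact J.irrefl (hw j)
  constructor
  · intro a ha b hb hab
    simp only [Finset.coe_insert, Set.mem_insert_iff, Finset.coe_image, Finset.coe_univ,
      Set.image_univ, Set.mem_range] at ha hb
    rcases ha with rfl | rfl | ⟨i, rfl⟩ <;> rcases hb with rfl | rfl | ⟨j, rfl⟩
    · exact absurd rfl hab
    · exact huw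
    · exact hu j
    · exact huw.symm
    · exact absurd rfl hab
    · exact hw j
    · exact (hu i).symm
    · exact (hw i).symm
    · exact hgg i j (fun e => hab (by rw [e]))
  · rw [Finset.card_insert_of_notMem hunw, Finset.card_insert_of_notMem hwng,
      Finset.card_image_of_injective _ hg, Finset.card_univ, Fintype.card_fin]
    omega

set_option maxHeartbeats 2000000 in
lemma sat_part (t k n : ℕ) (ht : 4 ≤ t) (hk : 2 * t - 4 ≤ k) (hn : 2 ≤ n) :
    ∀ u w : Fin k × Fin n, (multipartite k n).Adj u w → ¬ (fromRel (GRel t)).Adj u w →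
      ¬ ((fromRel (GRel t)) ⊔ SimpleGraph.fromEdgeSet {s(u, w)}).CliqueFree t := by
  intro u w hmu hna
  have hmu' : (u.1:ℕ) ≠ (w.1:ℕ) := fun e => hmu (Fin.val_inj.mp e)
  have hne : u ≠ w := fun e => hmu' (by rw [e])
  have hnuw : ¬ GRel t u w := fun h => hna (adj_iff.mpr (Or.inl h))
  have hnwu : ¬ GRel t w u := fun h => hna (adj_iff.mpr (Or.inr h))
  have hse : ∀ a b : Fin k × Fin n, (fromRel (GRel t)).Adj a b →
      ((fromRel (GRel t)) ⊔ SimpleGraph.fromEdgeSet {s(u, w)}).Adj a b :=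
    fun a b h => (SimpleGraph.sup_adj _ _ _ _).mpr (Or.inl h)
  have hedge : ((fromRel (GRel t)) ⊔ SimpleGraph.fromEdgeSet {s(u, w)}).Adj u w :=
    (SimpleGraph.sup_adj _ _ _ _).mpr (Or.inr ((SimpleGraph.fromEdgeSet_adj _).mpr ⟨rfl, hne⟩))
  by_cases hu1 : (u.1:ℕ) < 2*t-4 <;> by_cases hw1 : (w.1:ℕ) < 2*t-4
  · -- both low
    by_cases hu2 : (u.2:ℕ) = 0 <;> by_cases hw2 : (w.2:ℕ) = 0
    · -- both zero: same pair, construction (a)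
      rcases ne_or_eq ((u.1:ℕ)/2) ((w.1:ℕ)/2) with hp | hp
      · exact absurd (rel_zz hu1 hw1 hu2 hw2 hp) hnuw
      obtain ⟨c, hc1, hc2⟩ : ∃ c, c < t-2 ∧ c ≠ (u.1:ℕ)/2 := by
        refine ⟨if (u.1:ℕ)/2 = 0 then 1 else 0, ?_, ?_⟩ <;> split <;> omega
      set g : Fin (t-2) → Fin k × Fin n := fun j =>
        if (j:ℕ) = (u.1:ℕ)/2 then (⟨2*c, by omega⟩, ⟨1, by omega⟩)
        else if (j:ℕ) = c then (⟨2*c+1, by omega⟩, ⟨0, by omega⟩)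
        else (⟨2*(j:ℕ), by have := j.isLt; omega⟩, ⟨0, by omega⟩) with hgdef
      have hg1 : ∀ j : Fin (t-2),
          ((j:ℕ) = (u.1:ℕ)/2 ∧ ((g j).1:ℕ) = 2*c ∧ ((g j).2:ℕ) = 1) ∨
          ((j:ℕ) ≠ (u.1:ℕ)/2 ∧ (j:ℕ) = c ∧ ((g j).1:ℕ) = 2*c+1 ∧ ((g j).2:ℕ) = 0) ∨
          ((j:ℕ) ≠ (u.1:ℕ)/2 ∧ (j:ℕ) ≠ c ∧ ((g j).1:ℕ) = 2*(j:ℕ) ∧ ((g j).2:ℕ) = 0) := by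
        intro j
        by_cases h1 : (j:ℕ) = (u.1:ℕ)/2
        · exact Or.inl ⟨h1, by simp [hgdef, h1]⟩
        by_cases h2 : (j:ℕ) = c
        · exact Or.inr (Or.inl ⟨h1, h2, by simp [hgdef, h1, h2, hc2]⟩)
        · exact Or.inr (Or.inr ⟨h1, h2, by simp [hgdef, h1, h2]⟩)
      refine not_cliqueFree_of _ t (by omega) u w g ?_ hedge ?_ ?_ ?_
      · intro i j e
        have hv : ((g i).1:ℕ) = ((g j).1:ℕ) := by rw [e]
        rcases hg1 i with ⟨e1,e2,_⟩|⟨e1,e2,e3,_⟩|⟨e1,e2,e3,_⟩ <;>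
          rcases hg1 j with ⟨f1,f2,_⟩|⟨f1,f2,f3,_⟩|⟨f1,f2,f3,_⟩ <;>
          exact Fin.val_inj.mp (by omega)
      · intro j
        rcases hg1 j with ⟨e1,e2,e3⟩|⟨e1,e2,e3,e4⟩|⟨e1,e2,e3,e4⟩
        · exact hse _ _ (adj_iff.mpr (Or.inr (rel_nz (by omega) hu1 (by omega) (by omega) hu2)))
        · exact hse _ _ (adj_iff.mpr (Or.inl (rel_zz hu1 (by omega) hu2 e4 (by omega))))
        · have := j.isLt
          exact hse _ _ (adj_iff.mpr (Or.inl (rel_zz hu1 (by omega) hu2 e4 (by omega))))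
      · intro j
        rcases hg1 j with ⟨e1,e2,e3⟩|⟨e1,e2,e3,e4⟩|⟨e1,e2,e3,e4⟩
        · exact hse _ _ (adj_iff.mpr (Or.inr (rel_nz (by omega) hw1 (by omega) (by omega) hw2)))
        · exact hse _ _ (adj_iff.mpr (Or.inl (rel_zz hw1 (by omega) hw2 e4 (by omega))))
        · have := j.isLt
          exact hse _ _ (adj_iff.mpr (Or.inl (rel_zz hw1 (by omega) hw2 e4 (by omega))))
      · intro i j hij
        have hij' : (i:ℕ) ≠ (j:ℕ) := fun e => hij (Fin.val_inj.mp e)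
        have hi := i.isLt; have hj := j.isLt
        rcases hg1 i with ⟨e1,e2,e3⟩|⟨e1,e2,e3,e4⟩|⟨e1,e2,e3,e4⟩ <;>
          rcases hg1 j with ⟨f1,f2,f3⟩|⟨f1,f2,f3,f4⟩|⟨f1,f2,f3,f4⟩
        · exact (hij' (by omega)).elim
        · exact hse _ _ (adj_iff.mpr (Or.inl (rel_nz (by omega) (by omega) (by omega) (by omega) f4)))
        · exact hse _ _ (adj_iff.mpr (Or.inl (rel_nz (by omega) (by omega) (by omega) (by omega) f4)))
        · exact hse _ _ (adj_iff.mpr (Or.inr (rel_nz (by omega) (by omega) (by omega) (by omega) e4)))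
        · exact (hij' (by omega)).elim
        · exact hse _ _ (adj_iff.mpr (Or.inl (rel_zz (by omega) (by omega) e4 f4 (by omega))))
        · exact hse _ _ (adj_iff.mpr (Or.inr (rel_nz (by omega) (by omega) (by omega) (by omega) e4)))
        · exact hse _ _ (adj_iff.mpr (Or.inl (rel_zz (by omega) (by omega) e4 f4 (by omega))))
        · exact hse _ _ (adj_iff.mpr (Or.inl (rel_zz (by omega) (by omega) e4 f4 (by omega))))
    · exact absurd (rel_nz hw1 hu1 (Ne.symm hmu') hw2 hu2) hnwu
    · exact absurd (rel_nz hu1 hw1 hmu' hu2 hw2) hnuw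
    · -- both nonzero: different pairs, construction (b)
      rcases eq_or_ne ((u.1:ℕ)/2) ((w.1:ℕ)/2) with hp | hp
      · exact absurd (rel_nn hu1 hw1 hmu' hp hu2 hw2) hnuw
      have hpu : 4*((u.1:ℕ)/2)+1-(u.1:ℕ) < 2*t-4 ∧ (4*((u.1:ℕ)/2)+1-(u.1:ℕ))/2 = (u.1:ℕ)/2 ∧
          4*((u.1:ℕ)/2)+1-(u.1:ℕ) ≠ (u.1:ℕ) := by omega
      have hpw : 4*((w.1:ℕ)/2)+1-(w.1:ℕ) < 2*t-4 ∧ (4*((w.1:ℕ)/2)+1-(w.1:ℕ))/2 = (w.1:ℕ)/2 ∧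
          4*((w.1:ℕ)/2)+1-(w.1:ℕ) ≠ (w.1:ℕ) := by omega
      set g : Fin (t-2) → Fin k × Fin n := fun j =>
        if (j:ℕ) = (u.1:ℕ)/2 then (⟨4*((u.1:ℕ)/2)+1-(u.1:ℕ), by omega⟩, ⟨0, by omega⟩)
        else if (j:ℕ) = (w.1:ℕ)/2 then (⟨4*((w.1:ℕ)/2)+1-(w.1:ℕ), by omega⟩, ⟨0, by omega⟩)
        else (⟨2*(j:ℕ), by have := j.isLt; omega⟩, ⟨0, by omega⟩) with hgdef
      have hg1 : ∀ j : Fin (t-2),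
          (((j:ℕ) = (u.1:ℕ)/2 ∧ ((g j).1:ℕ) = 4*((u.1:ℕ)/2)+1-(u.1:ℕ)) ∨
           ((j:ℕ) ≠ (u.1:ℕ)/2 ∧ (j:ℕ) = (w.1:ℕ)/2 ∧ ((g j).1:ℕ) = 4*((w.1:ℕ)/2)+1-(w.1:ℕ)) ∨
           ((j:ℕ) ≠ (u.1:ℕ)/2 ∧ (j:ℕ) ≠ (w.1:ℕ)/2 ∧ ((g j).1:ℕ) = 2*(j:ℕ))) ∧
          ((g j).2:ℕ) = 0 := by
        intro j
        by_cases h1 : (j:ℕ) = (u.1:ℕ)/2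
        · exact ⟨Or.inl ⟨h1, by simp [hgdef, h1]⟩, by simp [hgdef, h1]⟩
        by_cases h2 : (j:ℕ) = (w.1:ℕ)/2
        · exact ⟨Or.inr (Or.inl ⟨h1, h2, by simp [hgdef, h1, h2, Ne.symm hp]⟩),
            by simp [hgdef, h1, h2, Ne.symm hp]⟩
        · exact ⟨Or.inr (Or.inr ⟨h1, h2, by simp [hgdef, h1, h2]⟩),
            by simp [hgdef, h1, h2]⟩
      refine not_cliqueFree_of _ t (by omega) u w g ?_ hedge ?_ ?_ ?_
      · intro i j e
        have hv : ((g i).1:ℕ) = ((g j).1:ℕ) := by rw [e]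
        have e1 := (hg1 i).1; have f1 := (hg1 j).1
        exact Fin.val_inj.mp (by omega)
      · intro j
        obtain ⟨e1, e2⟩ := hg1 j
        have hj := j.isLt
        exact hse _ _ (adj_iff.mpr (Or.inl (rel_nz hu1 (by omega) (by omega) hu2 e2)))
      · intro j
        obtain ⟨e1, e2⟩ := hg1 j
        have hj := j.isLt
        exact hse _ _ (adj_iff.mpr (Or.inl (rel_nz hw1 (by omega) (by omega) hw2 e2)))
      · intro i j hij
        have hij' : (i:ℕ) ≠ (j:ℕ) := fun e => hij (Fin.val_inj.mp e)
        obtain ⟨e1, e2⟩ := hg1 i; obtain ⟨f1, f2⟩ := hg1 j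
        have hi := i.isLt; have hj := j.isLt
        exact hse _ _ (adj_iff.mpr (Or.inl (rel_zz (by omega) (by omega) e2 f2 (by omega))))
  · -- u low, w high
    by_cases hu2 : (u.2:ℕ) = 0
    · exact absurd (rel_hz (by omega) hu1 hu2) hnwu
    · have hpu : 4*((u.1:ℕ)/2)+1-(u.1:ℕ) < 2*t-4 ∧ (4*((u.1:ℕ)/2)+1-(u.1:ℕ))/2 = (u.1:ℕ)/2 ∧
          4*((u.1:ℕ)/2)+1-(u.1:ℕ) ≠ (u.1:ℕ) := by omega
      set g : Fin (t-2) → Fin k × Fin n := fun j =>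
        if (j:ℕ) = (u.1:ℕ)/2 then (⟨4*((u.1:ℕ)/2)+1-(u.1:ℕ), by omega⟩, ⟨0, by omega⟩)
        else (⟨2*(j:ℕ), by have := j.isLt; omega⟩, ⟨0, by omega⟩) with hgdef
      have hg1 : ∀ j : Fin (t-2),
          (((j:ℕ) = (u.1:ℕ)/2 ∧ ((g j).1:ℕ) = 4*((u.1:ℕ)/2)+1-(u.1:ℕ)) ∨
           ((j:ℕ) ≠ (u.1:ℕ)/2 ∧ ((g j).1:ℕ) = 2*(j:ℕ))) ∧ ((g j).2:ℕ) = 0 := by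
        intro j
        by_cases h1 : (j:ℕ) = (u.1:ℕ)/2
        · exact ⟨Or.inl ⟨h1, by simp [hgdef, h1]⟩, by simp [hgdef, h1]⟩
        · exact ⟨Or.inr ⟨h1, by simp [hgdef, h1]⟩, by simp [hgdef, h1]⟩
      refine not_cliqueFree_of _ t (by omega) u w g ?_ hedge ?_ ?_ ?_
      · intro i j e
        have hv : ((g i).1:ℕ) = ((g j).1:ℕ) := by rw [e]
        have e1 := (hg1 i).1; have f1 := (hg1 j).1
        exact Fin.val_inj.mp (by omega)
      · intro j
        obtain ⟨e1, e2⟩ := hg1 j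
        have hj := j.isLt
        exact hse _ _ (adj_iff.mpr (Or.inl (rel_nz hu1 (by omega) (by omega) hu2 e2)))
      · intro j
        obtain ⟨e1, e2⟩ := hg1 j
        have hj := j.isLt
        exact hse _ _ (adj_iff.mpr (Or.inl (rel_hz (by omega) (by omega) e2)))
      · intro i j hij
        have hij' : (i:ℕ) ≠ (j:ℕ) := fun e => hij (Fin.val_inj.mp e)
        obtain ⟨e1, e2⟩ := hg1 i; obtain ⟨f1, f2⟩ := hg1 j
        have hi := i.isLt; have hj := j.isLt
        exact hse _ _ (adj_iff.mpr (Or.inl (rel_zz (by omega) (by omega) e2 f2 (by omega))))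
  · -- u high, w low
    by_cases hw2 : (w.2:ℕ) = 0
    · exact absurd (rel_hz (by omega) hw1 hw2) hnuw
    · have hpw : 4*((w.1:ℕ)/2)+1-(w.1:ℕ) < 2*t-4 ∧ (4*((w.1:ℕ)/2)+1-(w.1:ℕ))/2 = (w.1:ℕ)/2 ∧
          4*((w.1:ℕ)/2)+1-(w.1:ℕ) ≠ (w.1:ℕ) := by omega
      set g : Fin (t-2) → Fin k × Fin n := fun j =>
        if (j:ℕ) = (w.1:ℕ)/2 then (⟨4*((w.1:ℕ)/2)+1-(w.1:ℕ), by omega⟩, ⟨0, by omega⟩)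
        else (⟨2*(j:ℕ), by have := j.isLt; omega⟩, ⟨0, by omega⟩) with hgdef
      have hg1 : ∀ j : Fin (t-2),
          (((j:ℕ) = (w.1:ℕ)/2 ∧ ((g j).1:ℕ) = 4*((w.1:ℕ)/2)+1-(w.1:ℕ)) ∨
           ((j:ℕ) ≠ (w.1:ℕ)/2 ∧ ((g j).1:ℕ) = 2*(j:ℕ))) ∧ ((g j).2:ℕ) = 0 := by
        intro j
        by_cases h1 : (j:ℕ) = (w.1:ℕ)/2
        · exact ⟨Or.inl ⟨h1, by simp [hgdef, h1]⟩, by simp [hgdef, h1]⟩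
        · exact ⟨Or.inr ⟨h1, by simp [hgdef, h1]⟩, by simp [hgdef, h1]⟩
      refine not_cliqueFree_of _ t (by omega) u w g ?_ hedge ?_ ?_ ?_
      · intro i j e
        have hv : ((g i).1:ℕ) = ((g j).1:ℕ) := by rw [e]
        have e1 := (hg1 i).1; have f1 := (hg1 j).1
        exact Fin.val_inj.mp (by omega)
      · intro j
        obtain ⟨e1, e2⟩ := hg1 j
        have hj := j.isLt
        exact hse _ _ (adj_iff.mpr (Or.inl (rel_hz (by omega) (by omega) e2)))
      · intro j
        obtain ⟨e1, e2⟩ := hg1 j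
        have hj := j.isLt
        exact hse _ _ (adj_iff.mpr (Or.inl (rel_nz hw1 (by omega) (by omega) hw2 e2)))
      · intro i j hij
        have hij' : (i:ℕ) ≠ (j:ℕ) := fun e => hij (Fin.val_inj.mp e)
        obtain ⟨e1, e2⟩ := hg1 i; obtain ⟨f1, f2⟩ := hg1 j
        have hi := i.isLt; have hj := j.isLt
        exact hse _ _ (adj_iff.mpr (Or.inl (rel_zz (by omega) (by omega) e2 f2 (by omega))))
  · -- both high, construction (e)
    set g : Fin (t-2) → Fin k × Fin n := fun j =>
      (⟨2*(j:ℕ), by have := j.isLt; omega⟩, ⟨0, by omega⟩) with hgdef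
    have hg1 : ∀ j : Fin (t-2), ((g j).1:ℕ) = 2*(j:ℕ) ∧ ((g j).2:ℕ) = 0 :=
      fun j => ⟨rfl, rfl⟩
    refine not_cliqueFree_of _ t (by omega) u w g ?_ hedge ?_ ?_ ?_
    · intro i j e
      have hv : ((g i).1:ℕ) = ((g j).1:ℕ) := by rw [e]
      have e1 := (hg1 i).1; have f1 := (hg1 j).1
      exact Fin.val_inj.mp (by omega)
    · intro j
      obtain ⟨e1, e2⟩ := hg1 j
      have hj := j.isLt
      exact hse _ _ (adj_iff.mpr (Or.inl (rel_hz (by omega) (by omega) e2)))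
    · intro j
      obtain ⟨e1, e2⟩ := hg1 j
      have hj := j.isLt
      exact hse _ _ (adj_iff.mpr (Or.inl (rel_hz (by omega) (by omega) e2)))
    · intro i j hij
      have hij' : (i:ℕ) ≠ (j:ℕ) := fun e => hij (Fin.val_inj.mp e)
      obtain ⟨e1, e2⟩ := hg1 i; obtain ⟨f1, f2⟩ := hg1 j
      have hi := i.isLt; have hj := j.isLt
      exact hse _ _ (adj_iff.mpr (Or.inl (rel_zz (by omega) (by omega) e2 f2 (by omega))))

lemma card_filter_prod {α β : Type*} [Fintype α] [Fintype β] [DecidableEq α]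
    (R : α → β → Prop) [∀ a b, Decidable (R a b)] :
    (Finset.univ.filter fun p : α × β => R p.1 p.2).card
      = ∑ a : α, (Finset.univ.filter fun b => R a b).card := by
  rw [Finset.card_eq_sum_card_fiberwise (f := Prod.fst) (t := Finset.univ)
    (fun x _ => Finset.mem_univ _)]
  refine Finset.sum_congr rfl fun a _ => ?_
  refine Finset.card_nbij' (fun p => p.2) (fun b => (a, b)) ?_ ?_ ?_ ?_
  · intro p hp
    simp only [Finset.mem_coe, Finset.mem_filter, Finset.mem_univ, true_and] at hp ⊢
    rcases hp with ⟨h1, h2⟩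
    rw [← h2]; exact h1
  · intro b hb
    simp only [Finset.mem_coe, Finset.mem_filter, Finset.mem_univ, true_and] at hb ⊢
    exact ⟨hb, trivial⟩
  · intro p hp
    simp only [Finset.mem_coe, Finset.mem_filter] at hp
    exact Prod.ext hp.2.symm rfl
  · intro b _; rfl

lemma card_filter_val {k : ℕ} (P : ℕ → Prop) [DecidablePred P] :
    (Finset.univ.filter fun r : Fin k => P (r:ℕ)).card = ((Finset.range k).filter P).card := by
  refine Finset.card_nbij (fun r => (r:ℕ)) ?_ ?_ ?_
  · intro a ha
    simp only [Finset.mem_coe, Finset.mem_filter, Finset.mem_univ, true_and, Finset.mem_range] at ha ⊢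
    exact ⟨a.isLt, ha⟩
  · intro a _ b _ e; exact Fin.val_inj.mp e
  · intro b hb
    simp only [Finset.mem_coe, Finset.mem_filter, Finset.mem_range] at hb
    exact ⟨⟨b, hb.1⟩, by simp [hb.2], rfl⟩

lemma card_filter_pq {α β : Type*} [Fintype α] [Fintype β] (p : α → Prop) (q : β → Prop)
    [DecidablePred p] [DecidablePred q] :
    (Finset.univ.filter fun w : α × β => p w.1 ∧ q w.2).card
      = (Finset.univ.filter p).card * (Finset.univ.filter q).card := by
  rw [← Finset.univ_product_univ, Finset.filter_product, Finset.card_product]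

instance grelDec (t k n : ℕ) : ∀ u w : Fin k × Fin n, Decidable (GRel t u w) := fun u w => by
  unfold GRel; infer_instance

set_option maxHeartbeats 1000000 in
lemma count_part (t k n : ℕ) (ht : 4 ≤ t) (hk : 2 * t - 4 ≤ k) (hn : 2 ≤ n) :
    ((fromRel (GRel t (k:=k) (n:=n))).edgeSet.ncard : ℤ) =
      ((t : ℤ) - 2) * n ^ 2 + (2 * (t : ℤ) - 4) * (k * n) - 2 * (2 * (t : ℤ) - 4) * n -
        ((2 * t - 4).choose 2 : ℤ) := by
  letI instD : DecidableRel (fromRel (GRel t (k:=k) (n:=n))).Adj :=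
    fun u w => decidable_of_iff _ adj_iff.symm
  have hcoe : (fromRel (GRel t (k:=k) (n:=n))).edgeSet.ncard
      = (fromRel (GRel t (k:=k) (n:=n))).edgeFinset.card := by
    rw [← SimpleGraph.coe_edgeFinset, Set.ncard_coe_finset]
  have h2E := SimpleGraph.two_mul_card_edgeFinset (fromRel (GRel t (k:=k) (n:=n)))
  have hrfl : (Finset.univ.filter fun x : (Fin k × Fin n) × (Fin k × Fin n) =>
        match x with | (a, b) => (fromRel (GRel t)).Adj a b)
      = Finset.univ.filter (fun p : (Fin k × Fin n) × (Fin k × Fin n) =>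
        (fromRel (GRel t)).Adj p.1 p.2) := rfl
  rw [hrfl, card_filter_prod (fun a b => (fromRel (GRel t)).Adj a b)] at h2E
  -- range computations
  have c1 : ((Finset.range k).filter fun s => s < 2*t-4) = Finset.range (2*t-4) := by
    ext s; simp only [Finset.mem_filter, Finset.mem_range]; omega
  have c2 : ((Finset.range n).filter fun i => i = 0) = {0} := by
    ext s; simp only [Finset.mem_filter, Finset.mem_range, Finset.mem_singleton]; omega
  have c4 : ((Finset.range n).filter fun i => ¬ i = 0) = Finset.range n \ {0} := by
    ext s
    simp only [Finset.mem_filter, Finset.mem_range, Finset.mem_sdiff, Finset.mem_singleton]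
  have hs0 : ({0} : Finset ℕ) ⊆ Finset.range n := by
    intro x hx; simp only [Finset.mem_singleton] at hx; simp only [Finset.mem_range]; omega
  have c4' : ((Finset.range n).filter fun i => ¬ i = 0).card = n - 1 := by
    rw [c4, Finset.card_sdiff_of_subset hs0]; simp
  have c5 : ((Finset.range k).filter fun s => 2*t-4 ≤ s).card = k - (2*t-4) := by
    have : ((Finset.range k).filter fun s => 2*t-4 ≤ s) = Finset.range k \ Finset.range (2*t-4) := by
      ext s; simp only [Finset.mem_filter, Finset.mem_range, Finset.mem_sdiff]; omega
    have hsm : Finset.range (2*t-4) ⊆ Finset.range k := by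
      intro x hx; simp only [Finset.mem_range] at hx ⊢; omega
    rw [this, Finset.card_sdiff_of_subset hsm]; simp
  -- degree of high vertices
  have degH : ∀ v : Fin k × Fin n, 2*t-4 ≤ (v.1:ℕ) →
      (Finset.univ.filter fun w => (fromRel (GRel t)).Adj v w).card = 2*t-4 := by
    intro v hv
    have hiff : ∀ w : Fin k × Fin n, (fromRel (GRel t)).Adj v w ↔
        (((w.1:ℕ) < 2*t-4) ∧ ((w.2:ℕ) = 0)) := by
      intro w
      rw [adj_iff]
      unfold GRel
      simp only [ne_eq, ← Fin.val_inj]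
      omega
    rw [Finset.filter_congr (fun w _ => hiff w),
      card_filter_pq (fun r : Fin k => (r:ℕ) < 2*t-4) (fun i : Fin n => (i:ℕ) = 0),
      card_filter_val (fun s => s < 2*t-4), card_filter_val (fun i => i = 0),
      c1, c2, Finset.card_range, Finset.card_singleton, mul_one]
  -- degree of low zero vertices
  have degZ : ∀ v : Fin k × Fin n, (v.1:ℕ) < 2*t-4 → (v.2:ℕ) = 0 →
      (Finset.univ.filter fun w => (fromRel (GRel t)).Adj v w).card
        = (2*t-4-2)*1 + ((2*t-4-1)*(n-1) + (k-(2*t-4))*n) := by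
    intro v hv1 hv2
    have hiff : ∀ w : Fin k × Fin n, (fromRel (GRel t)).Adj v w ↔
        ((((w.1:ℕ) < 2*t-4 ∧ (w.1:ℕ)/2 ≠ (v.1:ℕ)/2) ∧ ((w.2:ℕ) = 0)) ∨
         ((((w.1:ℕ) < 2*t-4 ∧ (w.1:ℕ) ≠ (v.1:ℕ)) ∧ ((w.2:ℕ) ≠ 0)) ∨
          ((2*t-4 ≤ (w.1:ℕ)) ∧ (0 ≤ (w.2:ℕ))))) := by
      intro w
      rw [adj_iff]
      unfold GRel
      simp only [ne_eq, ← Fin.val_inj]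
      omega
    rw [Finset.filter_congr (fun w _ => hiff w), Finset.filter_or, Finset.filter_or,
      Finset.card_union_of_disjoint (by rw [Finset.disjoint_left]; intro x hx hx'; simp only [Finset.mem_filter, Finset.mem_union, Finset.mem_univ, true_and] at hx hx'; omega),
      Finset.card_union_of_disjoint (by rw [Finset.disjoint_filter]; intro x _ h1 h2; omega),
      card_filter_pq (fun r : Fin k => (r:ℕ) < 2*t-4 ∧ (r:ℕ)/2 ≠ (v.1:ℕ)/2) (fun i : Fin n => (i:ℕ) = 0),
      card_filter_pq (fun r : Fin k => (r:ℕ) < 2*t-4 ∧ (r:ℕ) ≠ (v.1:ℕ)) (fun i : Fin n => (i:ℕ) ≠ 0),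
      card_filter_pq (fun r : Fin k => 2*t-4 ≤ (r:ℕ)) (fun i : Fin n => 0 ≤ (i:ℕ)),
      card_filter_val (fun s => s < 2*t-4 ∧ s/2 ≠ (v.1:ℕ)/2), card_filter_val (fun i => i = 0),
      card_filter_val (fun s => s < 2*t-4 ∧ s ≠ (v.1:ℕ)), card_filter_val (fun i => i ≠ 0),
      card_filter_val (fun s => 2*t-4 ≤ s), card_filter_val (fun i => 0 ≤ i)]
    have d1 : ((Finset.range k).filter fun s => s < 2*t-4 ∧ s/2 ≠ (v.1:ℕ)/2)
        = Finset.range (2*t-4) \ {2*((v.1:ℕ)/2), 2*((v.1:ℕ)/2)+1} := by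
      ext s
      simp only [Finset.mem_filter, Finset.mem_range, Finset.mem_sdiff, Finset.mem_insert,
        Finset.mem_singleton]
      omega
    have d2 : ((Finset.range k).filter fun s => s < 2*t-4 ∧ s ≠ (v.1:ℕ))
        = Finset.range (2*t-4) \ {(v.1:ℕ)} := by
      ext s
      simp only [Finset.mem_filter, Finset.mem_range, Finset.mem_sdiff, Finset.mem_singleton]
      omega
    have d3 : ((Finset.range n).filter fun i => 0 ≤ i) = Finset.range n := by
      ext s; simp
    have hsp : ({2*((v.1:ℕ)/2), 2*((v.1:ℕ)/2)+1} : Finset ℕ) ⊆ Finset.range (2*t-4) := by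
      intro x hx; simp only [Finset.mem_insert, Finset.mem_singleton] at hx
      simp only [Finset.mem_range]; omega
    have hsv : ({(v.1:ℕ)} : Finset ℕ) ⊆ Finset.range (2*t-4) := by
      intro x hx; simp only [Finset.mem_singleton] at hx; simp only [Finset.mem_range]; omega
    rw [d1, d2, d3, c2, c5, c4', Finset.card_sdiff_of_subset hsp, Finset.card_sdiff_of_subset hsv,
      Finset.card_pair (by omega), Finset.card_singleton, Finset.card_singleton,
      Finset.card_range, Finset.card_range]
  -- degree of low nonzero vertices
  have degN : ∀ v : Fin k × Fin n, (v.1:ℕ) < 2*t-4 → (v.2:ℕ) ≠ 0 →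
      (Finset.univ.filter fun w => (fromRel (GRel t)).Adj v w).card = 1*(n-1) + (2*t-4-1)*1 := by
    intro v hv1 hv2
    have hiff : ∀ w : Fin k × Fin n, (fromRel (GRel t)).Adj v w ↔
        ((((w.1:ℕ) < 2*t-4 ∧ (w.1:ℕ)/2 = (v.1:ℕ)/2 ∧ (w.1:ℕ) ≠ (v.1:ℕ)) ∧ ((w.2:ℕ) ≠ 0)) ∨
         (((w.1:ℕ) < 2*t-4 ∧ (w.1:ℕ) ≠ (v.1:ℕ)) ∧ ((w.2:ℕ) = 0))) := by
      intro w
      rw [adj_iff]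
      unfold GRel
      simp only [ne_eq, ← Fin.val_inj]
      omega
    rw [Finset.filter_congr (fun w _ => hiff w), Finset.filter_or,
      Finset.card_union_of_disjoint (by rw [Finset.disjoint_filter]; intro x _ h1 h2; omega),
      card_filter_pq (fun r : Fin k => (r:ℕ) < 2*t-4 ∧ (r:ℕ)/2 = (v.1:ℕ)/2 ∧ (r:ℕ) ≠ (v.1:ℕ)) (fun i : Fin n => (i:ℕ) ≠ 0),
      card_filter_pq (fun r : Fin k => (r:ℕ) < 2*t-4 ∧ (r:ℕ) ≠ (v.1:ℕ)) (fun i : Fin n => (i:ℕ) = 0),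
      card_filter_val (fun s => s < 2*t-4 ∧ s/2 = (v.1:ℕ)/2 ∧ s ≠ (v.1:ℕ)), card_filter_val (fun i => i ≠ 0),
      card_filter_val (fun s => s < 2*t-4 ∧ s ≠ (v.1:ℕ)), card_filter_val (fun i => i = 0)]
    have d1 : ((Finset.range k).filter fun s => s < 2*t-4 ∧ s/2 = (v.1:ℕ)/2 ∧ s ≠ (v.1:ℕ))
        = {4*((v.1:ℕ)/2)+1-(v.1:ℕ)} := by
      ext s
      simp only [Finset.mem_filter, Finset.mem_range, Finset.mem_singleton]
      omega
    have d2 : ((Finset.range k).filter fun s => s < 2*t-4 ∧ s ≠ (v.1:ℕ))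
        = Finset.range (2*t-4) \ {(v.1:ℕ)} := by
      ext s
      simp only [Finset.mem_filter, Finset.mem_range, Finset.mem_sdiff, Finset.mem_singleton]
      omega
    have hsv : ({(v.1:ℕ)} : Finset ℕ) ⊆ Finset.range (2*t-4) := by
      intro x hx; simp only [Finset.mem_singleton] at hx; simp only [Finset.mem_range]; omega
    rw [d1, d2, c2, c4', Finset.card_sdiff_of_subset hsv, Finset.card_singleton, Finset.card_singleton,
      Finset.card_singleton, Finset.card_range]

  -- sum the degrees
  rw [Fintype.sum_prod_type] at h2E
  have inner : ∀ a : Fin k, (∑ b : Fin n,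
      (Finset.univ.filter fun w => (fromRel (GRel t)).Adj (a, b) w).card)
      = if (a:ℕ) < 2*t-4 then
          1*((2*t-4-2)*1 + ((2*t-4-1)*(n-1) + (k-(2*t-4))*n)) + (n-1)*(1*(n-1) + (2*t-4-1)*1)
        else n*(2*t-4) := by
    intro a
    by_cases haa : (a:ℕ) < 2*t-4
    · rw [if_pos haa]
      have hpt : ∀ b : Fin n, (Finset.univ.filter fun w => (fromRel (GRel t)).Adj (a, b) w).card
          = if (b:ℕ) = 0 then ((2*t-4-2)*1 + ((2*t-4-1)*(n-1) + (k-(2*t-4))*n))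
            else (1*(n-1) + (2*t-4-1)*1) := by
        intro b
        by_cases hb : (b:ℕ) = 0
        · rw [if_pos hb]; exact degZ (a, b) haa hb
        · rw [if_neg hb]; exact degN (a, b) haa hb
      rw [Finset.sum_congr rfl (fun b _ => hpt b), Finset.sum_ite, Finset.sum_const,
        Finset.sum_const, smul_eq_mul, smul_eq_mul,
        card_filter_val (fun i => i = 0), card_filter_val (fun i => ¬ i = 0), c2, c4',
        Finset.card_singleton]
    · rw [if_neg haa, Finset.sum_congr rfl (fun b _ => degH (a, b) (by change 2*t-4 ≤ (a:ℕ); omega)),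
        Finset.sum_const, smul_eq_mul, Finset.card_univ, Fintype.card_fin]
  rw [Finset.sum_congr rfl (fun a _ => inner a), Finset.sum_ite, Finset.sum_const,
    Finset.sum_const, smul_eq_mul, smul_eq_mul,
    card_filter_val (fun s => s < 2*t-4), card_filter_val (fun s => ¬ s < 2*t-4), c1,
    Finset.card_range] at h2E
  have c6 : ((Finset.range k).filter fun s => ¬ s < 2*t-4).card = k - (2*t-4) := by
    rw [Finset.filter_congr (fun x _ => by omega : ∀ x ∈ Finset.range k, (¬ x < 2*t-4) ↔ 2*t-4 ≤ x)]
    exact c5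
  rw [c6] at h2E
  -- wrap up
  rw [hcoe]
  have hch : 2 * ((2*t-4).choose 2) = (2*t-4) * (2*t-4-1) := by
    obtain ⟨d, hd⟩ : ∃ d, 2*t-4 = 2*d := ⟨t-2, by omega⟩
    rw [hd, Nat.choose_two_right]
    have h1 : 2*d*(2*d-1) = 2*(d*(2*d-1)) := by ring
    rw [h1, Nat.mul_div_cancel_left _ (by norm_num)]
  zify [show (2:ℕ) ≤ 2*t-4 by omega, show (1:ℕ) ≤ 2*t-4 by omega, show (1:ℕ) ≤ n by omega,
    show 2*t-4 ≤ k from hk, show (4:ℕ) ≤ 2*t by omega] at h2E hch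
  linarith [h2E, hch]

/-- Construction 3: the graph `G_{k,n,t}` (partite sets and vertices indexed from `0`
here, so `v_r^1` of the paper is the vertex `(r-1, 0)`, and the matching removed from
the clique on `S = {v_1^1, …, v_{2t-4}^1}` consists of the pairs `{2a, 2a+1}`) is a
`K_t`-saturated subgraph of `K_k^n` with
`(t−2)n² + (2t−4)kn − 2(2t−4)n − C(2t−4, 2)` edges. -/
theorem stmt_12 (t k n : ℕ) (ht : 4 ≤ t) (hk : 2 * t - 4 ≤ k) (hn : 2 ≤ n)
    (G : SimpleGraph (Fin k × Fin n))
    (hG : G = SimpleGraph.fromRel (fun u w =>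
      -- the clique on `S` minus the matching
      ((u.1 : ℕ) < 2 * t - 4 ∧ (w.1 : ℕ) < 2 * t - 4 ∧ u.1 ≠ w.1 ∧
        (u.2 : ℕ) = 0 ∧ (w.2 : ℕ) = 0 ∧ (u.1 : ℕ) / 2 ≠ (w.1 : ℕ) / 2) ∨
      -- `V_r − v_r^1` completely joined to `V_{r+1} − v_{r+1}^1` for matched pairs
      ((u.1 : ℕ) < 2 * t - 4 ∧ (w.1 : ℕ) < 2 * t - 4 ∧ u.1 ≠ w.1 ∧
        (u.1 : ℕ) / 2 = (w.1 : ℕ) / 2 ∧ (u.2 : ℕ) ≠ 0 ∧ (w.2 : ℕ) ≠ 0) ∨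
      -- `v_r^i` for `i ≥ 2`, `r ≤ 2t−4` joined to `v_s^1` for `s ≤ 2t−4`, `s ≠ r`
      ((u.1 : ℕ) < 2 * t - 4 ∧ (w.1 : ℕ) < 2 * t - 4 ∧ u.1 ≠ w.1 ∧
        (u.2 : ℕ) ≠ 0 ∧ (w.2 : ℕ) = 0) ∨
      -- all vertices outside the first `2t−4` parts joined to `S`
      (2 * t - 4 ≤ (u.1 : ℕ) ∧ (w.1 : ℕ) < 2 * t - 4 ∧ (w.2 : ℕ) = 0))) :
    IsSatIn t G (multipartite k n) ∧
      (G.edgeSet.ncard : ℤ) =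
        ((t : ℤ) - 2) * n ^ 2 + (2 * (t : ℤ) - 4) * (k * n) - 2 * (2 * (t : ℤ) - 4) * n -
          ((2 * t - 4).choose 2 : ℤ) := by
  subst hG
  have hGr : (fun u w : Fin k × Fin n =>
      ((u.1 : ℕ) < 2 * t - 4 ∧ (w.1 : ℕ) < 2 * t - 4 ∧ u.1 ≠ w.1 ∧
        (u.2 : ℕ) = 0 ∧ (w.2 : ℕ) = 0 ∧ (u.1 : ℕ) / 2 ≠ (w.1 : ℕ) / 2) ∨
      ((u.1 : ℕ) < 2 * t - 4 ∧ (w.1 : ℕ) < 2 * t - 4 ∧ u.1 ≠ w.1 ∧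
        (u.1 : ℕ) / 2 = (w.1 : ℕ) / 2 ∧ (u.2 : ℕ) ≠ 0 ∧ (w.2 : ℕ) ≠ 0) ∨
      ((u.1 : ℕ) < 2 * t - 4 ∧ (w.1 : ℕ) < 2 * t - 4 ∧ u.1 ≠ w.1 ∧
        (u.2 : ℕ) ≠ 0 ∧ (w.2 : ℕ) = 0) ∨
      (2 * t - 4 ≤ (u.1 : ℕ) ∧ (w.1 : ℕ) < 2 * t - 4 ∧ (w.2 : ℕ) = 0))
      = (GRel t (k:=k) (n:=n)) := rfl
  rw [hGr]
  refine ⟨⟨?_, cliqueFree_G t k n ht, sat_part t k n ht hk hn⟩, count_part t k n ht hk hn⟩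
  intro a b hab
  exact fun e => adj_ne hab (congrArg Fin.val e)
end
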